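/- arXiv:math/0306166 — 2 statements merged into one kernel-verified Lean document; each statement's English description precedes it below -/
import Mathlib

section
/- Let P be an induced-hereditary graph property, let G be a P-strict graph, and let G' ∈ P be a graph with G ≤ G'. Then G' is P-strict and dec_P(G) ≥ dec_P(G'). -/
/-!  Common framework: finite simple graphs on finite subsets of `ℕ`,
graph properties, `(P₁,…,Pₙ)`-partitions, products of properties,
`P`-decompositions, strict graphs, decomposability numbers, generating
sets, *-joins of copies, and the respecting notions from the paper. -/

/-- A finite simple graph on a finite vertex set of natural numbers. -/
structure SGraph where
  verts : Finset ℕ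
  Adj : ℕ → ℕ → Prop
  symm : ∀ a b, Adj a b → Adj b a
  loopless : ∀ a, ¬Adj a a
  mem_of_adj : ∀ a b, Adj a b → a ∈ verts ∧ b ∈ verts

/-- The null graph `K₀` (no vertices). -/
def nullGraph : SGraph where
  verts := ∅
  Adj _ _ := False
  symm _ _ h := h.elim
  loopless _ h := h
  mem_of_adj _ _ h := h.elim

namespace SGraph

/-- The subgraph of `G` induced by the vertex set `U`. -/
def induce (G : SGraph) (U : Finset ℕ) : SGraph where
  verts := G.verts ∩ U
  Adj a b := G.Adj a b ∧ a ∈ U ∧ b ∈ U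
  symm a b h := ⟨G.symm a b h.1, h.2.2, h.2.1⟩
  loopless a h := G.loopless a h.1
  mem_of_adj a b h := ⟨Finset.mem_inter.2 ⟨(G.mem_of_adj a b h.1).1, h.2.1⟩,
    Finset.mem_inter.2 ⟨(G.mem_of_adj a b h.1).2, h.2.2⟩⟩

/-- `φ` is an isomorphism from `G` onto `H`. -/
def IsoVia (G H : SGraph) (φ : ℕ → ℕ) : Prop :=
  Set.BijOn φ (G.verts : Set ℕ) (H.verts : Set ℕ) ∧
    ∀ a ∈ G.verts, ∀ b ∈ G.verts, (G.Adj a b ↔ H.Adj (φ a) (φ b))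

/-- `G` and `H` are isomorphic. -/
def Iso (G H : SGraph) : Prop := ∃ φ, G.IsoVia H φ

/-- `H ≤ G` : `H` is isomorphic to an induced subgraph of `G`. -/
def Le (H G : SGraph) : Prop := ∃ U ⊆ G.verts, H.Iso (G.induce U)

end SGraph

/-- `K` is the disjoint union of the family `C` of graphs. -/
def IsDisjUnion {k : ℕ} (K : SGraph) (C : Fin k → SGraph) : Prop :=
  (∀ i j, i ≠ j → Disjoint (C i).verts (C j).verts) ∧
  K.verts = Finset.univ.biUnion (fun j => (C j).verts) ∧
  ∀ a b, K.Adj a b ↔ ∃ j, (C j).Adj a b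

/-- `kG₀` : the set of graphs that are disjoint unions of `k` copies of `G₀`. -/
def kCopies (k : ℕ) (G₀ : SGraph) : Set SGraph :=
  {K | ∃ C : Fin k → SGraph, (∀ j, (C j).Iso G₀) ∧ IsDisjUnion K C}

/-- The *-join `G₁ * ⋯ * Gₙ` of a family of graphs (with pairwise disjoint
vertex sets): all graphs on the union of the vertex sets inducing each `Gᵢ`,
so that only edges joining distinct `Gᵢ`'s may be added. -/
def StarJoin {n : ℕ} (Gs : Fin n → SGraph) : Set SGraph :=
  {H | H.verts = Finset.univ.biUnion (fun i => (Gs i).verts) ∧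
    ∀ i, ∀ a ∈ (Gs i).verts, ∀ b ∈ (Gs i).verts, (H.Adj a b ↔ (Gs i).Adj a b)}

/-- `G * K₁` : the graphs obtained from `G` by adding one new vertex joined
arbitrarily to `G`. -/
def joinOne (G : SGraph) : Set SGraph :=
  {H | ∃ v, v ∉ G.verts ∧ H.verts = insert v G.verts ∧
    ∀ a ∈ G.verts, ∀ b ∈ G.verts, (H.Adj a b ↔ G.Adj a b)}

/-- A graph property: a nonempty isomorphism-closed class of graphs (it
contains the null graph, which by convention belongs to every property, and
some graph with at least one vertex). -/
def IsProperty (P : Set SGraph) : Prop :=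
  nullGraph ∈ P ∧ (∃ G ∈ P, G.verts.Nonempty) ∧
    ∀ G H, SGraph.Iso G H → G ∈ P → H ∈ P

/-- `P` is induced-hereditary. -/
def IndHer (P : Set SGraph) : Prop := ∀ G H, G ∈ P → SGraph.Le H G → H ∈ P

/-- `P` is additive: closed under disjoint unions. -/
def Additive' (P : Set SGraph) : Prop :=
  ∀ G H K : SGraph, G ∈ P → H ∈ P → IsDisjUnion K ![G, H] → K ∈ P

/-- An additive induced-hereditary graph property. -/
def IsAIH (P : Set SGraph) : Prop := IsProperty P ∧ IndHer P ∧ Additive' P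

/-- A `(P₁,…,Pₙ)`-partition of `G` (parts may be empty). -/
def IsPartitionInto {n : ℕ} (Ps : Fin n → Set SGraph) (G : SGraph)
    (V : Fin n → Finset ℕ) : Prop :=
  (∀ i j, i ≠ j → Disjoint (V i) (V j)) ∧
  Finset.univ.biUnion V = G.verts ∧
  ∀ i, G.induce (V i) ∈ Ps i

/-- The product `P₁ ∘ ⋯ ∘ Pₙ` of properties. -/
def ProdProp {n : ℕ} (Ps : Fin n → Set SGraph) : Set SGraph :=
  {G | ∃ V : Fin n → Finset ℕ, IsPartitionInto Ps G V}

/-- A `P`-decomposition of `G` with parts `V` : the parts are nonempty and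
partition `V(G)`, and for every `k ≥ 1` every graph in
`kG[V₁] * ⋯ * kG[Vₙ]` belongs to `P`. -/
def IsDecomp (P : Set SGraph) (G : SGraph) {n : ℕ} (V : Fin n → Finset ℕ) : Prop :=
  (∀ i, (V i).Nonempty) ∧
  (∀ i j, i ≠ j → Disjoint (V i) (V j)) ∧
  Finset.univ.biUnion V = G.verts ∧
  ∀ k : ℕ, 0 < k → ∀ A : Fin n → SGraph,
    (∀ i, A i ∈ kCopies k (G.induce (V i))) →
    (∀ i j, i ≠ j → Disjoint (A i).verts (A j).verts) →
    ∀ H ∈ StarJoin A, H ∈ P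

/-- `dec_P(G)` : the maximum number of parts of a `P`-decomposition of `G`
(`0` if there is none). -/
noncomputable def decP (P : Set SGraph) (G : SGraph) : ℕ :=
  sSup {n | ∃ V : Fin n → Finset ℕ, IsDecomp P G V}

/-- `G` is `P`-strict : `G ∈ P` but some graph in `G * K₁` is not in `P`. -/
def Strict (P : Set SGraph) (G : SGraph) : Prop :=
  G ∈ P ∧ ∃ H ∈ joinOne G, H ∉ P

/-- `dec(P) = min { dec_P(G) : G ∈ S(P) }`. -/
noncomputable def decOf (P : Set SGraph) : ℕ :=
  sInf (decP P '' {G | Strict P G})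

/-- `dec_P(𝒢) = min { dec_P(G) : G ∈ 𝒢 }`. -/
noncomputable def decSet (P 𝒢 : Set SGraph) : ℕ := sInf (decP P '' 𝒢)

/-- `⟨𝒢⟩` : the induced-hereditary property generated by `𝒢`. -/
def gen (𝒢 : Set SGraph) : Set SGraph := {G | ∃ H ∈ 𝒢, SGraph.Le G H}

/-- `𝒢` is a generating set for `P`. -/
def Generates (𝒢 P : Set SGraph) : Prop := gen 𝒢 = P

/-- `G` is uniquely `P`-decomposable: it has exactly one `P`-decomposition
(as an unordered partition) with `dec_P(G)` parts. -/
def UniquelyDecomposable (P : Set SGraph) (G : SGraph) : Prop :=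
  (∃ V : Fin (decP P G) → Finset ℕ, IsDecomp P G V) ∧
  ∀ V W : Fin (decP P G) → Finset ℕ, IsDecomp P G V → IsDecomp P G W →
    ∃ σ : Equiv.Perm (Fin (decP P G)), ∀ i, W i = V (σ i)

/-- Data exhibiting `Gstar` as a member of `s ⊛ G` : `s` pairwise disjoint
copies of `G` (given by isomorphisms) whose *-join contains `Gstar`. -/
structure CopyJoin (G : SGraph) (s : ℕ) (Gstar : SGraph) where
  copies : Fin s → SGraph
  maps : Fin s → ℕ → ℕ
  iso : ∀ k, G.IsoVia (copies k) (maps k)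
  disj : ∀ k l, k ≠ l → Disjoint (copies k).verts (copies l).verts
  mem : Gstar ∈ StarJoin copies

/-- `Gstar ∈ s ⊛ G` respects `d₀ = (U₁,…,Uₘ)` : every added edge between two
different copies of `G` meets (copies of) two different `Uⱼ`'s, i.e. there is
no edge between the copies of the same `Uⱼ` in two different copies of `G`. -/
def CopyJoin.RespectsJoin {G : SGraph} {s : ℕ} {Gstar : SGraph}
    (cj : CopyJoin G s Gstar) {m : ℕ} (U : Fin m → Finset ℕ) : Prop :=
  ∀ k l : Fin s, k ≠ l → ∀ j : Fin m, ∀ a ∈ (U j).image (cj.maps k),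
    ∀ b ∈ (U j).image (cj.maps l), ¬Gstar.Adj a b

/-- A partition `V` of `Gstar ∈ s ⊛ G` respects `d₀ = (U₁,…,Uₘ)` uniformly:
for each part `Vᵢ` there is a single `Uⱼ` such that in every copy `Gᵏ`,
`Vᵢ ∩ V(Gᵏ)` is contained in the copy of `Uⱼ`. -/
def CopyJoin.RespectsUniformly {G : SGraph} {s : ℕ} {Gstar : SGraph}
    (cj : CopyJoin G s Gstar) {n m : ℕ}
    (V : Fin n → Finset ℕ) (U : Fin m → Finset ℕ) : Prop :=
  ∀ i, ∃ j, ∀ k, V i ∩ (cj.copies k).verts ⊆ (U j).image (cj.maps k)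

/-- An irreducible additive induced-hereditary property: one that is not the
product of two additive induced-hereditary properties. -/
def IrredProp (P : Set SGraph) : Prop :=
  IsAIH P ∧ ¬∃ Q R : Set SGraph, IsAIH Q ∧ IsAIH R ∧ P = ProdProp ![Q, R]

namespace S3Aux

open Finset

/-- Symmetry of `IsoVia` via `invFunOn`. -/
theorem isoVia_symm {G H : SGraph} {φ : ℕ → ℕ} (h : G.IsoVia H φ) :
    H.IsoVia G (Function.invFunOn φ ↑G.verts) := by
  obtain ⟨hb, hadj⟩ := h
  have hinv := hb.invOn_invFunOn
  refine ⟨Set.BijOn.symm hinv.symm hb, ?_⟩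
  intro a ha b hb'
  have hga : Function.invFunOn φ ↑G.verts a ∈ (G.verts : Set ℕ) :=
    (Set.BijOn.symm hinv.symm hb).mapsTo ha
  have hgb : Function.invFunOn φ ↑G.verts b ∈ (G.verts : Set ℕ) :=
    (Set.BijOn.symm hinv.symm hb).mapsTo hb'
  have := hadj _ hga _ hgb
  rw [hinv.2 ha, hinv.2 hb'] at this
  exact (this).symm

/-- Push-forward of a graph along a map. -/
def mapGraph (G : SGraph) (f : ℕ → ℕ) : SGraph where
  verts := G.verts.image f
  Adj x y := x ≠ y ∧ ∃ a b, G.Adj a b ∧ f a = x ∧ f b = y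
  symm x y h := ⟨Ne.symm h.1, by obtain ⟨a, b, hab, ha, hb⟩ := h.2; exact ⟨b, a, G.symm _ _ hab, hb, ha⟩⟩
  loopless x h := h.1 rfl
  mem_of_adj x y h := by
    obtain ⟨a, b, hab, ha, hb⟩ := h.2
    obtain ⟨haG, hbG⟩ := G.mem_of_adj _ _ hab
    exact ⟨ha ▸ Finset.mem_image_of_mem f haG, hb ▸ Finset.mem_image_of_mem f hbG⟩

theorem isoVia_mapGraph {G : SGraph} {f : ℕ → ℕ} (hf : Set.InjOn f ↑G.verts) :
    G.IsoVia (mapGraph G f) f := by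
  constructor
  · refine ⟨fun a ha => ?_, hf, fun x hx => ?_⟩
    · exact_mod_cast Finset.mem_image_of_mem f (by exact_mod_cast ha)
    · simp only [mapGraph, Finset.coe_image] at hx
      exact hx
  · intro a ha b hb
    constructor
    · intro h
      refine ⟨fun he => ?_, a, b, h, rfl, rfl⟩
      have : a = b := hf (by exact_mod_cast ha) (by exact_mod_cast hb) he
      exact G.loopless a (this ▸ h)
    · rintro ⟨hne, a', b', hab, ha', hb'⟩
      obtain ⟨ha'G, hb'G⟩ := G.mem_of_adj _ _ hab
      have h1 : a' = a := hf (by exact_mod_cast ha'G) (by exact_mod_cast ha) ha'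
      have h2 : b' = b := hf (by exact_mod_cast hb'G) (by exact_mod_cast hb) hb'
      exact h1 ▸ h2 ▸ hab

/-- Disjoint union graph of a family. -/
def unionGraph {k : ℕ} (D : Fin k → SGraph) : SGraph where
  verts := Finset.univ.biUnion (fun j => (D j).verts)
  Adj a b := ∃ j, (D j).Adj a b
  symm a b h := by obtain ⟨j, hj⟩ := h; exact ⟨j, (D j).symm _ _ hj⟩
  loopless a h := by obtain ⟨j, hj⟩ := h; exact (D j).loopless a hj
  mem_of_adj a b h := by
    obtain ⟨j, hj⟩ := h
    obtain ⟨ha, hb⟩ := (D j).mem_of_adj _ _ hj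
    exact ⟨Finset.mem_biUnion.2 ⟨j, Finset.mem_univ _, ha⟩,
      Finset.mem_biUnion.2 ⟨j, Finset.mem_univ _, hb⟩⟩

theorem isDisjUnion_unionGraph {k : ℕ} {D : Fin k → SGraph}
    (h : ∀ i j, i ≠ j → Disjoint (D i).verts (D j).verts) :
    IsDisjUnion (unionGraph D) D :=
  ⟨h, rfl, fun _ _ => Iff.rfl⟩

theorem self_mem_kCopies_one (G₀ : SGraph) : G₀ ∈ kCopies 1 G₀ := by
  refine ⟨fun _ => G₀, fun _ => ⟨id, ?_, fun a _ b _ => Iff.rfl⟩, ?_, ?_, ?_⟩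
  · exact ⟨Set.mapsTo_id _, Set.injOn_id _, Set.surjOn_id _⟩
  · intro i j hij; exact absurd (Subsingleton.elim i j) hij
  · ext a; simp
  · intro a b
    constructor
    · intro h; exact ⟨0, h⟩
    · rintro ⟨_, h⟩; exact h

/-- Every part of a graph belongs to `P` given the whole does... (le via induced subgraph on own verts) -/
theorem le_of_verts_subset {H K : SGraph} (hsub : H.verts ⊆ K.verts)
    (hadj : ∀ a ∈ H.verts, ∀ b ∈ H.verts, (H.Adj a b ↔ K.Adj a b)) : H.Le K := by
  refine ⟨H.verts, hsub, id, ?_, ?_⟩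
  · have hv : (K.induce H.verts).verts = H.verts := Finset.inter_eq_right.2 hsub
    rw [hv]
    exact ⟨Set.mapsTo_id _, Set.injOn_id _, Set.surjOn_id _⟩
  · intro a ha b hb
    simp only [id]
    rw [hadj a ha b hb]
    unfold SGraph.induce
    simp only []
    constructor
    · intro h; exact ⟨h, ha, hb⟩
    · intro h; exact h.1

/-- the attach lemma: H (= G plus vertex v) is ≤ K when K contains a ψ-copy of G
together with a vertex x attached according to v's pattern. -/
theorem attach_le {G H K : SGraph} {ψ : ℕ → ℕ} {v x : ℕ}
    (hv : v ∉ G.verts) (hHv : H.verts = insert v G.verts)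
    (hinj : Set.InjOn ψ ↑G.verts)
    (hx : ∀ a ∈ G.verts, ψ a ≠ x)
    (hsub : ∀ a ∈ G.verts, ψ a ∈ K.verts) (hxK : x ∈ K.verts)
    (hadj1 : ∀ a ∈ G.verts, ∀ b ∈ G.verts, (H.Adj a b ↔ K.Adj (ψ a) (ψ b)))
    (hadj2 : ∀ b ∈ G.verts, (H.Adj v b ↔ K.Adj x (ψ b))) :
    H.Le K := by
  classical
  set U₀ : Finset ℕ := insert x (G.verts.image ψ) with hU₀
  have hU₀sub : U₀ ⊆ K.verts := by
    intro y hy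
    rcases Finset.mem_insert.1 hy with h | h
    · exact h ▸ hxK
    · obtain ⟨a, ha, rfl⟩ := Finset.mem_image.1 h
      exact hsub a ha
  set ρ : ℕ → ℕ := fun a => if a = v then x else ψ a with hρ
  have hρG : ∀ a ∈ G.verts, ρ a = ψ a := by
    intro a ha
    have : a ≠ v := fun h => hv (h ▸ ha)
    simp [hρ, this]
  have hρv : ρ v = x := by simp [hρ]
  have hρmem : ∀ c ∈ H.verts, ρ c ∈ U₀ := by
    intro c hc
    rw [hHv] at hc
    rcases Finset.mem_insert.1 hc with h | h
    · rw [h, hρv]; exact Finset.mem_insert_self _ _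
    · rw [hρG c h]; exact Finset.mem_insert_of_mem (Finset.mem_image_of_mem ψ h)
  refine ⟨U₀, hU₀sub, ρ, ?_, ?_⟩
  · -- BijOn
    have hverts : (K.induce U₀).verts = U₀ := Finset.inter_eq_right.2 hU₀sub
    rw [hverts]
    constructor
    · intro a ha
      rw [Finset.mem_coe] at ha ⊢
      exact hρmem a ha
    constructor
    · intro a ha b hb hab
      rw [Finset.mem_coe, hHv] at ha hb
      rcases Finset.mem_insert.1 ha with h1 | h1 <;>
        rcases Finset.mem_insert.1 hb with h2 | h2
      · exact h1.trans h2.symm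
      · exact absurd (by rw [h1, hρv, hρG b h2] at hab; exact hab.symm) (hx b h2)
      · exact absurd (by rw [h2, hρv, hρG a h1] at hab; exact hab) (hx a h1)
      · exact hinj (Finset.mem_coe.2 h1) (Finset.mem_coe.2 h2)
          (by rw [hρG a h1, hρG b h2] at hab; exact hab)
    · intro y hy
      rw [Finset.mem_coe] at hy
      rcases Finset.mem_insert.1 hy with h | h
      · refine ⟨v, Finset.mem_coe.2 ?_, by rw [hρv, h]⟩
        rw [hHv]; exact Finset.mem_insert_self v G.verts
      · obtain ⟨a, ha, rfl⟩ := Finset.mem_image.1 h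
        refine ⟨a, Finset.mem_coe.2 ?_, hρG a ha⟩
        rw [hHv]; exact Finset.mem_insert_of_mem ha
  · -- adjacency
    intro a ha b hb
    have hKa : (K.induce U₀).Adj (ρ a) (ρ b) ↔ K.Adj (ρ a) (ρ b) := by
      unfold SGraph.induce
      simp only []
      exact ⟨fun h => h.1, fun h => ⟨h, hρmem a ha, hρmem b hb⟩⟩
    rw [hKa]
    rw [hHv] at ha hb
    rcases Finset.mem_insert.1 ha with h1 | h1 <;> rcases Finset.mem_insert.1 hb with h2 | h2
    · subst h1; subst h2
      rw [hρv]
      exact ⟨fun h => absurd h (H.loopless _), fun h => absurd h (K.loopless _)⟩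
    · subst h1; rw [hρv, hρG b h2]; exact hadj2 b h2
    · subst h2; rw [hρv, hρG a h1]
      constructor
      · intro h; exact K.symm _ _ ((hadj2 a h1).1 (H.symm _ _ h))
      · intro h; exact H.symm _ _ ((hadj2 a h1).2 (K.symm _ _ h))
    · rw [hρG a h1, hρG b h2]; exact hadj1 a h1 b h2

end S3Aux
namespace S3Aux

open Finset

theorem decomp_pullback {P : Set SGraph} (hher : IndHer P)
    {G G' : SGraph} {U : Finset ℕ} {ψ : ℕ → ℕ}
    (hψ : G.IsoVia (G'.induce U) ψ)
    {Hb : SGraph} {v : ℕ} (hv : v ∉ G.verts) (hHv : Hb.verts = insert v G.verts)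
    (hHadj : ∀ a ∈ G.verts, ∀ b ∈ G.verts, (Hb.Adj a b ↔ G.Adj a b))
    (hHbP : Hb ∉ P)
    {n : ℕ} {V' : Fin n → Finset ℕ} (hdec : IsDecomp P G' V') :
    IsDecomp P G (fun i => G.verts.filter (fun a => ψ a ∈ V' i)) := by
  classical
  obtain ⟨hne', hdisj', hcov', hclo'⟩ := hdec
  set V : Fin n → Finset ℕ := fun i => G.verts.filter (fun a => ψ a ∈ V' i) with hV
  have hmem : ∀ a ∈ G.verts, ψ a ∈ G'.verts ∧ ψ a ∈ U := by
    intro a ha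
    have h2 := hψ.1.mapsTo (Finset.mem_coe.2 ha)
    rw [Finset.mem_coe] at h2
    exact Finset.mem_inter.1 h2
  have hinj : Set.InjOn ψ ↑G.verts := hψ.1.injOn
  have hadjG : ∀ a ∈ G.verts, ∀ b ∈ G.verts, (G.Adj a b ↔ G'.Adj (ψ a) (ψ b)) := by
    intro a ha b hb
    rw [hψ.2 a ha b hb]
    exact ⟨fun h => h.1, fun h => ⟨h, (hmem a ha).2, (hmem b hb).2⟩⟩
  have hV'sub : ∀ i, V' i ⊆ G'.verts := by
    intro i a ha
    rw [← hcov']; exact Finset.mem_biUnion.2 ⟨i, Finset.mem_univ _, ha⟩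
  have huniq : ∀ p q a, a ∈ V' p → a ∈ V' q → p = q := by
    intro p q a hp hq; by_contra h
    exact (Finset.disjoint_left.1 (hdisj' p q h)) hp hq
  have hexists : ∀ a ∈ G'.verts, ∃ p, a ∈ V' p := by
    intro a ha; rw [← hcov'] at ha
    obtain ⟨p, _, hp⟩ := Finset.mem_biUnion.1 ha; exact ⟨p, hp⟩
  have hVsub : ∀ i, V i ⊆ G.verts := fun i => Finset.filter_subset _ _
  have hVmem : ∀ i a, a ∈ V i ↔ a ∈ G.verts ∧ ψ a ∈ V' i := by
    intro i a; simp [hV]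
  have hψVi : ∀ i a, a ∈ V i → ψ a ∈ V' i := fun i a ha => ((hVmem i a).1 ha).2
  -- Part (a): nonemptiness
  have hne : ∀ i, (V i).Nonempty := by
    intro i
    by_contra hemp
    rw [Finset.not_nonempty_iff_eq_empty] at hemp
    have h0 : ∀ a ∈ G.verts, ψ a ∉ V' i := by
      intro a ha hmem'
      have h1 : a ∈ V i := (hVmem i a).2 ⟨ha, hmem'⟩
      rw [hemp] at h1; exact absurd h1 (Finset.notMem_empty a)
    obtain ⟨w, hw⟩ := hne' i
    set Wi : Finset ℕ := G.verts.image ψ with hWi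
    set K : SGraph :=
      { verts := G'.verts
        Adj := fun a b => (∃ p, a ∈ V' p ∧ b ∈ V' p ∧ G'.Adj a b) ∨
          ((∃ p q, p ≠ q ∧ a ∈ V' p ∧ b ∈ V' q) ∧
            ((a ∈ Wi ∧ b ∈ Wi ∧ G'.Adj a b) ∨
             (a = w ∧ ∃ c ∈ G.verts, ψ c = b ∧ Hb.Adj v c) ∨
             (b = w ∧ ∃ c ∈ G.verts, ψ c = a ∧ Hb.Adj v c)))
        symm := by
          rintro a b (⟨p, hp1, hp2, hadj⟩ | ⟨⟨p, q, hpq, hp, hq⟩, hrest⟩)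
          · exact Or.inl ⟨p, hp2, hp1, G'.symm _ _ hadj⟩
          · refine Or.inr ⟨⟨q, p, hpq.symm, hq, hp⟩, ?_⟩
            rcases hrest with ⟨h1, h2, h3⟩ | h | h
            · exact Or.inl ⟨h2, h1, G'.symm _ _ h3⟩
            · exact Or.inr (Or.inr h)
            · exact Or.inr (Or.inl h)
        loopless := by
          rintro a (⟨p, _, _, hadj⟩ | ⟨⟨p, q, hpq, hp, hq⟩, _⟩)
          · exact G'.loopless a hadj
          · exact hpq (huniq p q a hp hq)
        mem_of_adj := by
          rintro a b (⟨p, hp1, hp2, _⟩ | ⟨⟨p, q, _, hp, hq⟩, _⟩)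
          · exact ⟨hV'sub p hp1, hV'sub p hp2⟩
          · exact ⟨hV'sub p hp, hV'sub q hq⟩ } with hK
    have hKadj : ∀ a b, K.Adj a b ↔ ((∃ p, a ∈ V' p ∧ b ∈ V' p ∧ G'.Adj a b) ∨
          ((∃ p q, p ≠ q ∧ a ∈ V' p ∧ b ∈ V' q) ∧
            ((a ∈ Wi ∧ b ∈ Wi ∧ G'.Adj a b) ∨
             (a = w ∧ ∃ c ∈ G.verts, ψ c = b ∧ Hb.Adj v c) ∨
             (b = w ∧ ∃ c ∈ G.verts, ψ c = a ∧ Hb.Adj v c)))) := fun a b => Iff.rfl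
    have hKP : K ∈ P := by
      refine hclo' 1 one_pos (fun p => G'.induce (V' p))
        (fun p => S3Aux.self_mem_kCopies_one _) ?_ K ?_
      · intro p q hpq
        exact Finset.disjoint_of_subset_left Finset.inter_subset_right
          (Finset.disjoint_of_subset_right Finset.inter_subset_right (hdisj' p q hpq))
      · constructor
        · show K.verts = Finset.univ.biUnion fun p => (G'.induce (V' p)).verts
          ext a
          simp only [Finset.mem_biUnion, Finset.mem_univ, true_and]
          constructor
          · intro ha
            obtain ⟨p, hp⟩ := hexists a ha
            exact ⟨p, Finset.mem_inter.2 ⟨ha, hp⟩⟩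
          · rintro ⟨p, hp⟩; exact (Finset.mem_inter.1 hp).1
        · intro p a ha b hb
          have ha' := Finset.mem_inter.1 ha
          have hb' := Finset.mem_inter.1 hb
          constructor
          · rintro (⟨p', h1, h2, h3⟩ | ⟨⟨p', q', hpq, hp', hq'⟩, _⟩)
            · exact ⟨h3, ha'.2, hb'.2⟩
            · obtain rfl := huniq p' p a hp' ha'.2
              exact absurd (huniq q' p' b hq' hb'.2).symm hpq
          · rintro ⟨h3, hm1, hm2⟩
            exact Or.inl ⟨p, ha'.2, hb'.2, h3⟩
    refine absurd (hher K Hb hKP ?_) hHbP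
    refine S3Aux.attach_le (x := w) hv hHv hinj ?_ ?_ ?_ ?_ ?_
    · intro a ha he; exact h0 a ha (he ▸ hw)
    · intro a ha; exact (hmem a ha).1
    · exact hV'sub i hw
    · -- hadj1
      intro a ha b hb
      rw [hHadj a ha b hb, hadjG a ha b hb]
      obtain ⟨p, hp⟩ := hexists (ψ a) (hmem a ha).1
      obtain ⟨q, hq⟩ := hexists (ψ b) (hmem b hb).1
      constructor
      · intro h
        by_cases hpq : p = q
        · exact Or.inl ⟨p, hp, hpq ▸ hq, h⟩
        · exact Or.inr ⟨⟨p, q, hpq, hp, hq⟩,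
            Or.inl ⟨Finset.mem_image_of_mem ψ ha, Finset.mem_image_of_mem ψ hb, h⟩⟩
      · rintro (⟨p', _, _, h⟩ | ⟨_, (⟨_, _, h⟩ | ⟨he, _⟩ | ⟨he, _⟩)⟩)
        · exact h
        · exact h
        · exact absurd (he ▸ hw) (h0 a ha)
        · exact absurd (he ▸ hw) (h0 b hb)
    · -- hadj2
      intro b hb
      obtain ⟨q, hq⟩ := hexists (ψ b) (hmem b hb).1
      have hiq : i ≠ q := fun h => h0 b hb (h ▸ hq)
      constructor
      · intro h
        exact Or.inr ⟨⟨i, q, hiq, hw, hq⟩, Or.inr (Or.inl ⟨rfl, b, hb, rfl, h⟩)⟩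
      · rintro (⟨p', h1, h2, _⟩ | ⟨_, (⟨hwW, _, _⟩ | ⟨_, c, hc, hcb, hadj⟩ | ⟨hbw, _⟩)⟩)
        · cases huniq p' i w h1 hw
          exact absurd h2 (h0 b hb)
        · obtain ⟨c, hc, hcw⟩ := Finset.mem_image.1 hwW
          exact absurd (hcw.symm ▸ hw) (h0 c hc)
        · cases hinj (Finset.mem_coe.2 hc) (Finset.mem_coe.2 hb) hcb
          exact hadj
        · exact absurd (hbw ▸ hw) (h0 b hb)
  refine ⟨hne, ?_, ?_, ?_⟩
  · -- disjoint
    intro i j hij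
    rw [Finset.disjoint_left]
    intro a hai haj
    exact Finset.disjoint_left.1 (hdisj' i j hij) ((hVmem i a).1 hai).2 ((hVmem j a).1 haj).2
  · -- cover
    ext a
    simp only [Finset.mem_biUnion, Finset.mem_univ, true_and]
    constructor
    · rintro ⟨i, hi⟩; exact hVsub i hi
    · intro ha
      obtain ⟨p, hp⟩ := hexists (ψ a) (hmem a ha).1
      exact ⟨p, (hVmem p a).2 ⟨ha, hp⟩⟩
  · -- closure
    intro k hk A hA hAdisj H hH
    choose C hC using hA
    choose μ hμ using fun i j => (hC i).1 j
    set ν : Fin n → Fin k → ℕ → ℕ := fun i j => Function.invFunOn (μ i j) ↑(C i j).verts with hνdef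
    have hν : ∀ i j, (G.induce (V i)).IsoVia (C i j) (ν i j) := fun i j => S3Aux.isoVia_symm (hμ i j)
    have hGVverts : ∀ i, (G.induce (V i)).verts = V i := fun i => Finset.inter_eq_right.2 (hVsub i)
    have hG'Vverts : ∀ i, (G'.induce (V' i)).verts = V' i := fun i => Finset.inter_eq_right.2 (hV'sub i)
    have hνbij : ∀ i j, Set.BijOn (ν i j) ↑(V i) ↑(C i j).verts := by
      intro i j; have h1 := (hν i j).1; rwa [hGVverts i] at h1
    have hCsubA : ∀ i j, (C i j).verts ⊆ (A i).verts := by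
      intro i j a ha
      rw [(hC i).2.2.1]; exact Finset.mem_biUnion.2 ⟨j, Finset.mem_univ _, ha⟩
    have hAsubH : ∀ i, (A i).verts ⊆ H.verts := by
      intro i a ha
      rw [hH.1]; exact Finset.mem_biUnion.2 ⟨i, Finset.mem_univ _, ha⟩
    set N := H.verts.sup id + 1 with hNdef
    have hN : ∀ a ∈ H.verts, a < N := fun a ha => Nat.lt_succ_of_le (Finset.le_sup (f := id) ha)
    set χ := Function.invFunOn ψ ↑G.verts with hχdef
    have hχ : ∀ a ∈ G.verts, χ (ψ a) = a := fun a ha => hinj.leftInvOn_invFunOn (Finset.mem_coe.2 ha)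
    set σ : Fin n → Fin k → ℕ → ℕ := fun i j b =>
      if b ∈ (V i).image ψ then ν i j (χ b) else N + Nat.pair i.val (Nat.pair j.val b) with hσ
    have hσold : ∀ i j a, a ∈ V i → σ i j (ψ a) = ν i j a := by
      intro i j a ha
      have h1 : ψ a ∈ (V i).image ψ := Finset.mem_image_of_mem ψ ha
      simp only [hσ, if_pos h1, hχ a (hVsub i ha)]
    have hσold_mem : ∀ i j b, b ∈ (V i).image ψ → σ i j b ∈ (C i j).verts ∧ σ i j b < N := by
      intro i j b hbim
      obtain ⟨a, ha, rfl⟩ := Finset.mem_image.1 hbim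
      rw [hσold i j a ha]
      have h2 : ν i j a ∈ (C i j).verts := Finset.mem_coe.1 ((hνbij i j).mapsTo (Finset.mem_coe.2 ha))
      exact ⟨h2, hN _ (hAsubH i (hCsubA i j h2))⟩
    have hσnew : ∀ i j b, b ∉ (V i).image ψ → σ i j b = N + Nat.pair i.val (Nat.pair j.val b) := by
      intro i j b hb; simp only [hσ, if_neg hb]
    have hσinj : ∀ i j, Set.InjOn (σ i j) ↑(V' i) := by
      intro i j b1 hb1 b2 hb2 he
      by_cases h1 : b1 ∈ (V i).image ψ <;> by_cases h2 : b2 ∈ (V i).image ψ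
      · obtain ⟨a1, ha1, rfl⟩ := Finset.mem_image.1 h1
        obtain ⟨a2, ha2, rfl⟩ := Finset.mem_image.1 h2
        rw [hσold i j a1 ha1, hσold i j a2 ha2] at he
        rw [(hνbij i j).injOn (Finset.mem_coe.2 ha1) (Finset.mem_coe.2 ha2) he]
      · have e1 := (hσold_mem i j b1 h1).2
        have e2 := hσnew i j b2 h2
        omega
      · have e1 := hσnew i j b1 h1
        have e2 := (hσold_mem i j b2 h2).2
        omega
      · have e1 := hσnew i j b1 h1
        have e2 := hσnew i j b2 h2
        rw [e1, e2] at he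
        have h3 : Nat.pair i.val (Nat.pair j.val b1) = Nat.pair i.val (Nat.pair j.val b2) := by omega
        exact (Nat.pair_eq_pair.1 (Nat.pair_eq_pair.1 h3).2).2
    set D : Fin n → Fin k → SGraph := fun i j => S3Aux.mapGraph (G'.induce (V' i)) (σ i j) with hD
    have hDverts : ∀ i j, (D i j).verts = (V' i).image (σ i j) := by
      intro i j
      show (G'.induce (V' i)).verts.image _ = _
      rw [hG'Vverts]
    have hDiso : ∀ i j, (G'.induce (V' i)).IsoVia (D i j) (σ i j) := by
      intro i j
      apply S3Aux.isoVia_mapGraph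
      rw [hG'Vverts]
      exact hσinj i j
    have hDmem : ∀ i j x, x ∈ (D i j).verts →
        (x ∈ (C i j).verts ∧ x < N) ∨
        (∃ b, x = N + Nat.pair i.val (Nat.pair j.val b)) := by
      intro i j x hx
      rw [hDverts] at hx
      obtain ⟨b, hb, rfl⟩ := Finset.mem_image.1 hx
      by_cases hbi : b ∈ (V i).image ψ
      · exact Or.inl (hσold_mem i j b hbi)
      · exact Or.inr ⟨b, hσnew i j b hbi⟩
    have hCCdisj : ∀ i j i' j', (i, j) ≠ (i', j') → Disjoint (C i j).verts (C i' j').verts := by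
      intro i j i' j' hne2
      by_cases hii : i = i'
      · subst hii
        have hjj : j ≠ j' := fun h => hne2 (by rw [h])
        exact (hC i).2.1 j j' hjj
      · exact Finset.disjoint_of_subset_left (hCsubA i j)
          (Finset.disjoint_of_subset_right (hCsubA i' j') (hAdisj i i' hii))
    have hDdisj : ∀ i j i' j', (i, j) ≠ (i', j') → Disjoint (D i j).verts (D i' j').verts := by
      intro i j i' j' hne2
      rw [Finset.disjoint_left]
      intro x hx hx'
      rcases hDmem i j x hx with ⟨hc, hlt⟩ | ⟨b, he1⟩ <;>
        rcases hDmem i' j' x hx' with ⟨hc', hlt'⟩ | ⟨b', he⟩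
      · exact Finset.disjoint_left.1 (hCCdisj i j i' j' hne2) hc hc'
      · omega
      · omega
      · have hcode : Nat.pair i.val (Nat.pair j.val b) = Nat.pair i'.val (Nat.pair j'.val b') := by omega
        obtain ⟨h1, h2⟩ := Nat.pair_eq_pair.1 hcode
        obtain ⟨h3, _⟩ := Nat.pair_eq_pair.1 h2
        exact hne2 (by rw [Fin.ext h1, Fin.ext h3])
    set B : Fin n → SGraph := fun i => S3Aux.unionGraph (D i) with hB
    have hBcopies : ∀ i, B i ∈ kCopies k (G'.induce (V' i)) := by
      intro i
      exact ⟨D i, fun j => ⟨_, S3Aux.isoVia_symm (hDiso i j)⟩,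
        S3Aux.isDisjUnion_unionGraph (fun j j' hjj =>
          hDdisj i j i j' (fun h => hjj (congrArg Prod.snd h)))⟩
    have hBdisj : ∀ i i', i ≠ i' → Disjoint (B i).verts (B i').verts := by
      intro i i' hii
      rw [Finset.disjoint_left]
      intro x hx hx'
      obtain ⟨j, _, hj⟩ := Finset.mem_biUnion.1 hx
      obtain ⟨j', _, hj'⟩ := Finset.mem_biUnion.1 hx'
      exact Finset.disjoint_left.1 (hDdisj i j i' j' (fun h => hii (congrArg Prod.fst h))) hj hj'
    have hCsubD : ∀ i j, (C i j).verts ⊆ (D i j).verts := by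
      intro i j x hx
      obtain ⟨a, ha, hax⟩ := (hνbij i j).surjOn (Finset.mem_coe.2 hx)
      rw [hDverts]
      exact Finset.mem_image.2 ⟨ψ a, hψVi i a (Finset.mem_coe.1 ha),
        by rw [hσold i j a (Finset.mem_coe.1 ha)]; exact hax⟩
    have hAsubB : ∀ i, (A i).verts ⊆ (B i).verts := by
      intro i x hx
      rw [(hC i).2.2.1] at hx
      obtain ⟨j, _, hj⟩ := Finset.mem_biUnion.1 hx
      exact Finset.mem_biUnion.2 ⟨j, Finset.mem_univ _, hCsubD i j hj⟩
    set Hstar : SGraph :=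
      { verts := Finset.univ.biUnion (fun i => (B i).verts)
        Adj := fun a b => (∃ i, (B i).Adj a b) ∨
          ((∃ p q, p ≠ q ∧ a ∈ (B p).verts ∧ b ∈ (B q).verts) ∧ H.Adj a b)
        symm := by
          rintro a b (⟨i, h⟩ | ⟨⟨p, q, hpq, hp, hq⟩, h⟩)
          · exact Or.inl ⟨i, (B i).symm _ _ h⟩
          · exact Or.inr ⟨⟨q, p, hpq.symm, hq, hp⟩, H.symm _ _ h⟩
        loopless := by
          rintro a (⟨i, h⟩ | ⟨_, h⟩)
          · exact (B i).loopless a h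
          · exact H.loopless a h
        mem_of_adj := by
          rintro a b (⟨i, h⟩ | ⟨⟨p, q, _, hp, hq⟩, _⟩)
          · obtain ⟨h1, h2⟩ := (B i).mem_of_adj _ _ h
            exact ⟨Finset.mem_biUnion.2 ⟨i, Finset.mem_univ _, h1⟩,
              Finset.mem_biUnion.2 ⟨i, Finset.mem_univ _, h2⟩⟩
          · exact ⟨Finset.mem_biUnion.2 ⟨p, Finset.mem_univ _, hp⟩,
              Finset.mem_biUnion.2 ⟨q, Finset.mem_univ _, hq⟩⟩ } with hHstar
    have hHstarStar : Hstar ∈ StarJoin B := by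
      refine ⟨rfl, ?_⟩
      intro i a ha b hb
      constructor
      · rintro (⟨i', h⟩ | ⟨⟨p, q, hpq, hp, hq⟩, _⟩)
        · have hm := (B i').mem_of_adj _ _ h
          by_cases hii : i' = i
          · exact hii ▸ h
          · exact absurd ha (Finset.disjoint_left.1 (hBdisj i' i hii) hm.1)
        · by_cases hpi : p = i
          · subst hpi
            by_cases hqi : q = p
            · exact absurd hqi hpq.symm
            · exact absurd hb (Finset.disjoint_left.1 (hBdisj q p hqi) hq)
          · exact absurd ha (Finset.disjoint_left.1 (hBdisj p i hpi) hp)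
      · intro h; exact Or.inl ⟨i, h⟩
    have hHstarP : Hstar ∈ P := hclo' k hk B hBcopies hBdisj Hstar hHstarStar
    have hHpart : ∀ a ∈ H.verts, ∃ p, a ∈ (A p).verts := by
      intro a ha
      rw [hH.1] at ha
      obtain ⟨p, _, hp⟩ := Finset.mem_biUnion.1 ha
      exact ⟨p, hp⟩
    have hfwd : ∀ a ∈ H.verts, ∀ b ∈ H.verts, H.Adj a b → Hstar.Adj a b := by
      intro a ha b hb hadj
      obtain ⟨p, hp⟩ := hHpart a ha
      obtain ⟨q, hq⟩ := hHpart b hb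
      by_cases hpq : p = q
      · subst hpq
        have hApadj : (A p).Adj a b := (hH.2 p a hp b hq).1 hadj
        obtain ⟨j, hj⟩ := ((hC p).2.2.2 a b).1 hApadj
        obtain ⟨ha', hb'⟩ := (C p j).mem_of_adj _ _ hj
        obtain ⟨xa, hxa, hxae⟩ := (hνbij p j).surjOn (Finset.mem_coe.2 ha')
        obtain ⟨xb, hxb, hxbe⟩ := (hνbij p j).surjOn (Finset.mem_coe.2 hb')
        rw [Finset.mem_coe] at hxa hxb
        rw [← hxae, ← hxbe] at hj
        have hxaGV : xa ∈ (G.induce (V p)).verts := by rw [hGVverts]; exact hxa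
        have hxbGV : xb ∈ (G.induce (V p)).verts := by rw [hGVverts]; exact hxb
        have hGind : (G.induce (V p)).Adj xa xb := ((hν p j).2 xa hxaGV xb hxbGV).2 hj
        have hG'ind : (G'.induce (V' p)).Adj (ψ xa) (ψ xb) :=
          ⟨(hadjG xa (hVsub p hxa) xb (hVsub p hxb)).1 hGind.1, hψVi p xa hxa, hψVi p xb hxb⟩
        have hψaGV : ψ xa ∈ (G'.induce (V' p)).verts := by rw [hG'Vverts]; exact hψVi p xa hxa
        have hψbGV : ψ xb ∈ (G'.induce (V' p)).verts := by rw [hG'Vverts]; exact hψVi p xb hxb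
        have hDadj : (D p j).Adj a b := by
          rw [← hxae, ← hxbe, ← hσold p j xa hxa, ← hσold p j xb hxb]
          exact ((hDiso p j).2 (ψ xa) hψaGV (ψ xb) hψbGV).1 hG'ind
        exact Or.inl ⟨p, ⟨j, hDadj⟩⟩
      · exact Or.inr ⟨⟨p, q, hpq, hAsubB p hp, hAsubB q hq⟩, hadj⟩
    have hbwd : ∀ a ∈ H.verts, ∀ b ∈ H.verts, Hstar.Adj a b → H.Adj a b := by
      intro a ha b hb h
      rcases h with ⟨i, hBadj⟩ | ⟨_, hadj⟩
      · obtain ⟨j, hDadj⟩ := hBadj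
        obtain ⟨hne2, c, d, hcd, hca, hdb⟩ := hDadj
        have hcV : c ∈ V' i := by
          have := (G'.induce (V' i)).mem_of_adj _ _ hcd
          rw [hG'Vverts] at this; exact this.1
        have hdV : d ∈ V' i := by
          have := (G'.induce (V' i)).mem_of_adj _ _ hcd
          rw [hG'Vverts] at this; exact this.2
        have hcim : c ∈ (V i).image ψ := by
          by_contra hcn
          have e1 := hσnew i j c hcn
          have e2 := hN a ha
          omega
        have hdim : d ∈ (V i).image ψ := by
          by_contra hdn
          have e1 := hσnew i j d hdn
          have e2 := hN b hb
          omega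
        obtain ⟨xa, hxa, rfl⟩ := Finset.mem_image.1 hcim
        obtain ⟨xb, hxb, rfl⟩ := Finset.mem_image.1 hdim
        have hea : a = ν i j xa := by rw [← hca, hσold i j xa hxa]
        have heb : b = ν i j xb := by rw [← hdb, hσold i j xb hxb]
        have hGind : (G.induce (V i)).Adj xa xb :=
          ⟨(hadjG xa (hVsub i hxa) xb (hVsub i hxb)).2 hcd.1, hxa, hxb⟩
        have hxaGV : xa ∈ (G.induce (V i)).verts := by rw [hGVverts]; exact hxa
        have hxbGV : xb ∈ (G.induce (V i)).verts := by rw [hGVverts]; exact hxb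
        have hCadj : (C i j).Adj a b := by
          rw [hea, heb]
          exact ((hν i j).2 xa hxaGV xb hxbGV).1 hGind
        have haA : a ∈ (A i).verts := hCsubA i j ((C i j).mem_of_adj _ _ hCadj).1
        have hbA : b ∈ (A i).verts := hCsubA i j ((C i j).mem_of_adj _ _ hCadj).2
        exact (hH.2 i a haA b hbA).2 (((hC i).2.2.2 a b).2 ⟨j, hCadj⟩)
      · exact hadj
    have hHsub : H.verts ⊆ Hstar.verts := by
      intro a ha
      obtain ⟨p, hp⟩ := hHpart a ha
      exact Finset.mem_biUnion.2 ⟨p, Finset.mem_univ _, hAsubB p hp⟩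
    exact hher Hstar H hHstarP
      (S3Aux.le_of_verts_subset hHsub
        (fun a ha b hb => ⟨hfwd a ha b hb, hbwd a ha b hb⟩))

end S3Aux
-- STATEMENT 3
theorem statement3 (P : Set SGraph) (hP : IsProperty P) (hher : IndHer P)
    (G G' : SGraph) (hG : Strict P G) (hG' : G' ∈ P) (hle : SGraph.Le G G') :
    Strict P G' ∧ decP P G' ≤ decP P G := by
  classical
  obtain ⟨U, hU, ψ, hψ⟩ := hle
  obtain ⟨hGP, Hb, ⟨v, hv, hHv, hHadj⟩, hHbP⟩ := hG
  have hmem : ∀ a ∈ G.verts, ψ a ∈ G'.verts ∧ ψ a ∈ U := by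
    intro a ha
    have h2 := hψ.1.mapsTo (Finset.mem_coe.2 ha)
    rw [Finset.mem_coe] at h2
    exact Finset.mem_inter.1 h2
  have hinj : Set.InjOn ψ ↑G.verts := hψ.1.injOn
  have hadjG : ∀ a ∈ G.verts, ∀ b ∈ G.verts, (G.Adj a b ↔ G'.Adj (ψ a) (ψ b)) := by
    intro a ha b hb
    rw [hψ.2 a ha b hb]
    exact ⟨fun h => h.1, fun h => ⟨h, (hmem a ha).2, (hmem b hb).2⟩⟩
  constructor
  · -- Strict P G'
    refine ⟨hG', ?_⟩
    set x := G'.verts.sup id + 1 with hxdef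
    have hxG' : x ∉ G'.verts := by
      intro hx
      have h2 := Finset.le_sup (f := id) hx
      simp only [id_eq] at h2
      omega
    set K : SGraph :=
      { verts := insert x G'.verts
        Adj := fun a b => G'.Adj a b ∨
          (a = x ∧ ∃ c ∈ G.verts, ψ c = b ∧ Hb.Adj v c) ∨
          (b = x ∧ ∃ c ∈ G.verts, ψ c = a ∧ Hb.Adj v c)
        symm := by
          rintro a b (h | h | h)
          · exact Or.inl (G'.symm _ _ h)
          · exact Or.inr (Or.inr h)
          · exact Or.inr (Or.inl h)
        loopless := by
          rintro a (h | ⟨rfl, c, hc, hcb, _⟩ | ⟨rfl, c, hc, hcb, _⟩)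
          · exact G'.loopless a h
          · exact hxG' (hcb ▸ (hmem c hc).1)
          · exact hxG' (hcb ▸ (hmem c hc).1)
        mem_of_adj := by
          rintro a b (h | ⟨rfl, c, hc, hcb, _⟩ | ⟨rfl, c, hc, hcb, _⟩)
          · obtain ⟨h1, h2⟩ := G'.mem_of_adj _ _ h
            exact ⟨Finset.mem_insert_of_mem h1, Finset.mem_insert_of_mem h2⟩
          · exact ⟨Finset.mem_insert_self _ _,
              Finset.mem_insert_of_mem (hcb ▸ (hmem c hc).1)⟩
          · exact ⟨Finset.mem_insert_of_mem (hcb ▸ (hmem c hc).1),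
              Finset.mem_insert_self _ _⟩ } with hK
    refine ⟨K, ⟨x, hxG', rfl, ?_⟩, ?_⟩
    · -- K ∈ joinOne G'
      intro a ha b hb
      constructor
      · rintro (h | ⟨rfl, _⟩ | ⟨rfl, _⟩)
        · exact h
        · exact absurd ha hxG'
        · exact absurd hb hxG'
      · exact fun h => Or.inl h
    · -- K ∉ P
      intro hKP
      refine hHbP (hher K Hb hKP ?_)
      refine S3Aux.attach_le (x := x) hv hHv hinj ?_ ?_ ?_ ?_ ?_
      · intro a ha he; exact hxG' (he ▸ (hmem a ha).1)
      · intro a ha; exact Finset.mem_insert_of_mem (hmem a ha).1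
      · exact Finset.mem_insert_self _ _
      · intro a ha b hb
        rw [hHadj a ha b hb, hadjG a ha b hb]
        constructor
        · exact fun h => Or.inl h
        · rintro (h | ⟨he, _⟩ | ⟨he, _⟩)
          · exact h
          · exact absurd (he ▸ (hmem a ha).1) hxG'
          · exact absurd (he ▸ (hmem b hb).1) hxG'
      · intro b hb
        constructor
        · intro h
          exact Or.inr (Or.inl ⟨rfl, b, hb, rfl, h⟩)
        · rintro (h | ⟨_, c, hc, hcb, hadj⟩ | ⟨he, _⟩)
          · exact absurd (G'.mem_of_adj _ _ h).1 hxG'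
          · cases hinj (Finset.mem_coe.2 hc) (Finset.mem_coe.2 hb) hcb
            exact hadj
          · exact absurd (he ▸ (hmem b hb).1) hxG'
  · -- decP
    unfold decP
    apply csSup_le_csSup'
    · refine ⟨G.verts.card, ?_⟩
      rintro n ⟨V, hVne, hVdisj, hVcov, _⟩
      choose f hf using hVne
      have h1 : (Finset.univ : Finset (Fin n)).card ≤ G.verts.card := by
        refine Finset.card_le_card_of_injOn f (fun i _ => ?_) (fun i _ j _ he => ?_)
        · rw [← hVcov]; exact Finset.mem_biUnion.2 ⟨i, Finset.mem_univ _, hf i⟩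
        · by_contra hij
          exact Finset.disjoint_left.1 (hVdisj i j hij) (hf i) (he ▸ hf j)
      simpa using h1
    · rintro n ⟨V', hdec⟩
      exact ⟨_, S3Aux.decomp_pullback hher hψ hv hHv hHadj hHbP hdec⟩
end

section
/- Let P be an induced-hereditary graph property that is not the class of all graphs, write d := dec(P), and let G be a P-strict graph with dec_P(G) = d having a unique P-decomposition (V₁,…,V_d) with d parts. Suppose G is an induced subgraph of a graph H (on a vertex set containing V(G)) with H ∈ P. Then H is P-strict, dec_P(H) = d, and for every P-decomposition (W₁,…,W_d) of H with d parts, the Wᵢ can be relabelled so that Wᵢ ∩ V(G) = Vᵢ for all i. -/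
namespace S7aux

lemma sup_succ_not_mem (s : Finset ℕ) : s.sup id + 1 ∉ s := by
  intro h
  have := Finset.le_sup (f := id) h
  simp only [id] at this; omega

lemma iso_refl (G : SGraph) : G.Iso G :=
  ⟨id, Set.bijOn_id _, fun _ _ _ _ => Iff.rfl⟩

lemma iso_symm {G H : SGraph} (h : G.Iso H) : H.Iso G := by
  obtain ⟨φ, hb, hadj⟩ := h
  refine ⟨Function.invFunOn φ G.verts, ?_, ?_⟩
  · exact Set.BijOn.symm ⟨hb.surjOn.rightInvOn_invFunOn,
      fun a ha => hb.injOn (Function.invFunOn_mem ⟨a, ha, rfl⟩) ha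
        (Function.invFunOn_eq ⟨a, ha, rfl⟩)⟩ hb
  · intro a ha b hb'
    have h1 : Function.invFunOn φ G.verts a ∈ G.verts :=
      Function.invFunOn_mem (hb.surjOn ha)
    have h2 : Function.invFunOn φ G.verts b ∈ G.verts :=
      Function.invFunOn_mem (hb.surjOn hb')
    have e1 : φ (Function.invFunOn φ G.verts a) = a := Function.invFunOn_eq (hb.surjOn ha)
    have e2 : φ (Function.invFunOn φ G.verts b) = b := Function.invFunOn_eq (hb.surjOn hb')
    have := hadj _ h1 _ h2
    rw [e1, e2] at this
    exact this.symm

/-- An induced subgraph is `≤` the original. -/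
lemma le_induce (G : SGraph) (U : Finset ℕ) : (G.induce U).Le G := by
  refine ⟨U ∩ G.verts, Finset.inter_subset_right, id, ?_, ?_⟩
  · have : ((G.induce U).verts : Set ℕ) = ((G.induce (U ∩ G.verts)).verts : Set ℕ) := by
      simp only [SGraph.induce]; ext a
      simp only [Finset.coe_inter, Set.mem_inter_iff, Finset.mem_coe]; tauto
    rw [this]; exact Set.bijOn_id _
  · intro a ha b hb
    simp only [SGraph.induce, Finset.mem_inter, id] at ha hb ⊢
    constructor
    · rintro ⟨h, h1, h2⟩
      exact ⟨h, ⟨h1, (G.mem_of_adj _ _ h).1⟩, ⟨h2, (G.mem_of_adj _ _ h).2⟩⟩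
    · rintro ⟨h, ⟨h1, _⟩, ⟨h2, _⟩⟩
      exact ⟨h, h1, h2⟩

lemma mem_of_iso {P : Set SGraph} (hP : IsProperty P) {G H : SGraph}
    (h : G.Iso H) (hG : G ∈ P) : H ∈ P := hP.2.2 G H h hG

lemma decomp_le_card {P : Set SGraph} {G : SGraph} {n : ℕ} {V : Fin n → Finset ℕ}
    (h : IsDecomp P G V) : n ≤ G.verts.card := by
  choose a ha using h.1
  have : (Finset.univ : Finset (Fin n)).card ≤ G.verts.card := by
    apply Finset.card_le_card_of_injOn a
    · intro i _
      have : a i ∈ Finset.univ.biUnion V := Finset.mem_biUnion.2 ⟨i, Finset.mem_univ _, ha i⟩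
      rw [h.2.2.1] at this; exact this
    · intro i _ j _ hij
      by_contra hne
      exact (Finset.disjoint_left.1 (h.2.1 i j hne)) (ha i) (hij ▸ ha j)
  simpa using this

end S7aux
namespace S7aux

lemma strict_of_superset {P : Set SGraph} (hP : IsProperty P) (hher : IndHer P)
    {G : SGraph} (hGs : Strict P G)
    {H : SGraph} (hHP : H ∈ P) (hsub : G.verts ⊆ H.verts)
    (hind : ∀ a ∈ G.verts, ∀ b ∈ G.verts, (H.Adj a b ↔ G.Adj a b)) :
    Strict P H := by
  obtain ⟨hGP, F, ⟨v, hv, hFv, hFG⟩, hFnP⟩ := hGs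
  set v' := H.verts.sup id + 1 with hv'def
  have hv'H : v' ∉ H.verts := sup_succ_not_mem _
  have hv'G : v' ∉ G.verts := fun h => hv'H (hsub h)
  have hGne : ∀ x ∈ G.verts, x ≠ v' := fun x hx h => hv'G (h ▸ hx)
  refine ⟨hHP, ?_⟩
  set H' : SGraph :=
          { verts := insert v' H.verts
            Adj := fun a b => H.Adj a b ∨ (a = v' ∧ b ∈ G.verts ∧ F.Adj v b) ∨
              (b = v' ∧ a ∈ G.verts ∧ F.Adj v a)
            symm := by
              rintro a b (h | ⟨h1, h2, h3⟩ | ⟨h1, h2, h3⟩)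
              · exact Or.inl (H.symm _ _ h)
              · exact Or.inr (Or.inr ⟨h1, h2, h3⟩)
              · exact Or.inr (Or.inl ⟨h1, h2, h3⟩)
            loopless := by
              rintro a (h | ⟨h1, h2, _⟩ | ⟨h1, h2, _⟩)
              · exact H.loopless _ h
              · exact hv'G (h1 ▸ h2)
              · exact hv'G (h1 ▸ h2)
            mem_of_adj := by
              rintro a b (h | ⟨h1, h2, _⟩ | ⟨h1, h2, _⟩)
              · exact ⟨Finset.mem_insert_of_mem (H.mem_of_adj _ _ h).1,
                  Finset.mem_insert_of_mem (H.mem_of_adj _ _ h).2⟩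
              · exact ⟨h1 ▸ Finset.mem_insert_self _ _,
                  Finset.mem_insert_of_mem (hsub h2)⟩
              · exact ⟨Finset.mem_insert_of_mem (hsub h2),
                  h1 ▸ Finset.mem_insert_self _ _⟩ } with hH'
  refine ⟨H', ⟨v', hv'H, rfl, ?_⟩, ?_⟩
  · intro a ha b hb
    show (H.Adj a b ∨ _ ∨ _) ↔ H.Adj a b
    constructor
    · rintro (h | ⟨h1, _, _⟩ | ⟨h1, _, _⟩)
      · exact h
      · exact absurd (h1 ▸ ha) hv'H
      · exact absurd (h1 ▸ hb) hv'H
    · exact Or.inl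
  · -- H' ∉ P
    intro hH'P
    apply hFnP
    have hKP : H'.induce (insert v' G.verts) ∈ P :=
      hher H' _ hH'P (le_induce H' (insert v' G.verts))
    have hH'verts : H'.verts = insert v' H.verts := rfl
    have hH'adj : ∀ a b, H'.Adj a b ↔ (H.Adj a b ∨ (a = v' ∧ b ∈ G.verts ∧ F.Adj v b) ∨
        (b = v' ∧ a ∈ G.verts ∧ F.Adj v a)) := fun a b => Iff.rfl
    set ρ : ℕ → ℕ := fun a => if a = v' then v else a with hρ
    have hρG : ∀ x ∈ G.verts, ρ x = x := by
      intro x hx; simp only [hρ]; rw [if_neg (hGne x hx)]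
    have hρv' : ρ v' = v := by simp [hρ]
    have hverts : (H'.induce (insert v' G.verts)).verts = insert v' G.verts := by
      rw [show (H'.induce (insert v' G.verts)).verts = H'.verts ∩ insert v' G.verts from rfl,
        hH'verts]
      ext a
      simp only [Finset.mem_inter, Finset.mem_insert]
      constructor
      · rintro ⟨_, h⟩; exact h
      · rintro (rfl | h)
        · exact ⟨Or.inl rfl, Or.inl rfl⟩
        · exact ⟨Or.inr (hsub h), Or.inr h⟩
    have hadjK : ∀ a b, (H'.induce (insert v' G.verts)).Adj a b ↔
        (H'.Adj a b ∧ a ∈ insert v' G.verts ∧ b ∈ insert v' G.verts) := fun a b => Iff.rfl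
    refine mem_of_iso hP ⟨ρ, ?_, ?_⟩ hKP
    · -- BijOn
      rw [hverts, hFv]
      refine ⟨?_, ?_, ?_⟩
      · intro a ha
        simp only [Finset.coe_insert, Set.mem_insert_iff, Finset.mem_coe] at ha ⊢
        rcases ha with rfl | ha
        · exact Or.inl hρv'
        · rw [hρG a ha]; exact Or.inr ha
      · intro a ha b hb hab
        simp only [Finset.coe_insert, Set.mem_insert_iff, Finset.mem_coe] at ha hb
        rcases ha with rfl | ha <;> rcases hb with rfl | hb
        · rfl
        · rw [hρv', hρG b hb] at hab; exact absurd (hab ▸ hb) hv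
        · rw [hρv', hρG a ha] at hab; exact absurd (hab ▸ ha) hv
        · rwa [hρG a ha, hρG b hb] at hab
      · intro b hbmem
        simp only [Finset.coe_insert, Set.mem_insert_iff, Finset.mem_coe] at hbmem
        rcases hbmem with rfl | hb
        · exact ⟨v', by simp, hρv'⟩
        · exact ⟨b, by simp [hb], hρG b hb⟩
    · -- adjacency
      intro a ha b hb
      rw [hverts] at ha hb
      rw [hadjK, hH'adj]
      rcases Finset.mem_insert.1 ha with rfl | haG <;>
        rcases Finset.mem_insert.1 hb with rfl | hbG
      · -- a = b = v'
        rw [hρv']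
        constructor
        · rintro ⟨(h | ⟨_, h2, _⟩ | ⟨_, h2, _⟩), _, _⟩
          · exact absurd (H.mem_of_adj _ _ h).1 hv'H
          · exact absurd h2 hv'G
          · exact absurd h2 hv'G
        · intro h; exact absurd h (F.loopless v)
      · -- a = v', b ∈ G
        rw [hρv', hρG b hbG]
        constructor
        · rintro ⟨(h | ⟨_, _, h3⟩ | ⟨h1, _, _⟩), _, _⟩
          · exact absurd (H.mem_of_adj _ _ h).1 hv'H
          · exact h3
          · exact absurd (h1 ▸ hbG) hv'G
        · intro h
          exact ⟨Or.inr (Or.inl ⟨rfl, hbG, h⟩), Finset.mem_insert_self _ _,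
            Finset.mem_insert_of_mem hbG⟩
      · -- a ∈ G, b = v'
        rw [hρv', hρG a haG]
        constructor
        · rintro ⟨(h | ⟨h1, _, _⟩ | ⟨_, _, h3⟩), _, _⟩
          · exact absurd (H.mem_of_adj _ _ h).2 hv'H
          · exact absurd (h1 ▸ haG) hv'G
          · exact F.symm _ _ h3
        · intro h
          exact ⟨Or.inr (Or.inr ⟨rfl, haG, F.symm _ _ h⟩),
            Finset.mem_insert_of_mem haG, Finset.mem_insert_self _ _⟩
      · -- a, b ∈ G
        rw [hρG a haG, hρG b hbG, hFG a haG b hbG]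
        constructor
        · rintro ⟨(h | ⟨h1, _, _⟩ | ⟨h1, _, _⟩), _, _⟩
          · exact (hind a haG b hbG).1 h
          · exact absurd (h1 ▸ haG) hv'G
          · exact absurd (h1 ▸ hbG) hv'G
        · intro h
          exact ⟨Or.inl ((hind a haG b hbG).2 h), Finset.mem_insert_of_mem haG,
            Finset.mem_insert_of_mem hbG⟩

end S7aux
namespace S7aux

lemma kCopies_one_self (K : SGraph) : K ∈ kCopies 1 K := by
  refine ⟨fun _ => K, fun _ => iso_refl K, ?_, ?_, ?_⟩
  · intro i j hij; exact absurd (Subsingleton.elim i j) hij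
  · ext x; simp
  · intro a b; exact ⟨fun h => ⟨0, h⟩, fun ⟨_, h⟩ => h⟩

lemma parts_meet {P : Set SGraph} (hP : IsProperty P) (hher : IndHer P)
    {G : SGraph} (hGs : Strict P G)
    {H : SGraph} (hsub : G.verts ⊆ H.verts)
    (hind : ∀ a ∈ G.verts, ∀ b ∈ G.verts, (H.Adj a b ↔ G.Adj a b))
    {n : ℕ} {W : Fin n → Finset ℕ} (hW : IsDecomp P H W) (i₀ : Fin n) :
    (W i₀ ∩ G.verts).Nonempty := by
  by_contra hcon
  rw [Finset.not_nonempty_iff_eq_empty] at hcon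
  obtain ⟨hGP, F, ⟨v, hv, hFv, hFG⟩, hFnP⟩ := hGs
  obtain ⟨w, hw⟩ := hW.1 i₀
  have hwG : w ∉ G.verts := fun h => by
    have : w ∈ W i₀ ∩ G.verts := Finset.mem_inter.2 ⟨hw, h⟩
    simp [hcon] at this
  have hWsub : ∀ i, W i ⊆ H.verts := fun i x hx =>
    hW.2.2.1 ▸ Finset.mem_biUnion.2 ⟨i, Finset.mem_univ _, hx⟩
  have hwH : w ∈ H.verts := hWsub i₀ hw
  have hpart : ∀ x (i j : Fin n), x ∈ W i → x ∈ W j → i = j := by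
    intro x i j hi hj
    by_contra hij; exact Finset.disjoint_left.1 (hW.2.1 i j hij) hi hj
  set Hs : SGraph :=
    { verts := H.verts
      Adj := fun a b => (∃ i, (H.induce (W i)).Adj a b) ∨
        ((¬∃ i, a ∈ W i ∧ b ∈ W i) ∧
          ((a ∈ G.verts ∧ b ∈ G.verts ∧ G.Adj a b) ∨ (a = w ∧ b ∈ G.verts ∧ F.Adj v b) ∨
            (b = w ∧ a ∈ G.verts ∧ F.Adj v a)))
      symm := by
        rintro a b (⟨i, h⟩ | ⟨hg, (⟨h1, h2, h3⟩ | ⟨h1, h2, h3⟩ | ⟨h1, h2, h3⟩)⟩)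
        · exact Or.inl ⟨i, (H.induce (W i)).symm _ _ h⟩
        · exact Or.inr ⟨fun ⟨i, hx, hy⟩ => hg ⟨i, hy, hx⟩, Or.inl ⟨h2, h1, G.symm _ _ h3⟩⟩
        · exact Or.inr ⟨fun ⟨i, hx, hy⟩ => hg ⟨i, hy, hx⟩, Or.inr (Or.inr ⟨h1, h2, h3⟩)⟩
        · exact Or.inr ⟨fun ⟨i, hx, hy⟩ => hg ⟨i, hy, hx⟩, Or.inr (Or.inl ⟨h1, h2, h3⟩)⟩
      loopless := by
        rintro a (⟨i, h⟩ | ⟨hg, (⟨h1, h2, h3⟩ | ⟨h1, h2, h3⟩ | ⟨h1, h2, h3⟩)⟩)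
        · exact (H.induce (W i)).loopless _ h
        · exact G.loopless _ h3
        · exact hwG (h1 ▸ h2)
        · exact hwG (h1 ▸ h2)
      mem_of_adj := by
        rintro a b (⟨i, h⟩ | ⟨hg, (⟨h1, h2, h3⟩ | ⟨h1, h2, h3⟩ | ⟨h1, h2, h3⟩)⟩)
        · have := (H.induce (W i)).mem_of_adj _ _ h
          exact ⟨(Finset.mem_inter.1 this.1).1, (Finset.mem_inter.1 this.2).1⟩
        · exact ⟨hsub h1, hsub h2⟩
        · exact ⟨h1 ▸ hwH, hsub h2⟩
        · exact ⟨hsub h2, h1 ▸ hwH⟩ } with hHs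
  have hHsAdj : ∀ a b, Hs.Adj a b ↔ ((∃ i, (H.induce (W i)).Adj a b) ∨
      ((¬∃ i, a ∈ W i ∧ b ∈ W i) ∧
        ((a ∈ G.verts ∧ b ∈ G.verts ∧ G.Adj a b) ∨ (a = w ∧ b ∈ G.verts ∧ F.Adj v b) ∨
          (b = w ∧ a ∈ G.verts ∧ F.Adj v a)))) := fun a b => Iff.rfl
  have hstar : Hs ∈ StarJoin (fun i => H.induce (W i)) := by
    constructor
    · show H.verts = _
      ext x
      simp only [Finset.mem_biUnion, Finset.mem_univ, true_and]
      constructor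
      · intro hx
        have : x ∈ Finset.univ.biUnion W := hW.2.2.1.symm ▸ hx
        obtain ⟨i, _, hi⟩ := Finset.mem_biUnion.1 this
        exact ⟨i, Finset.mem_inter.2 ⟨hx, hi⟩⟩
      · rintro ⟨i, hi⟩; exact (Finset.mem_inter.1 hi).1
    · intro i a ha b hb
      rw [hHsAdj]
      have hai : a ∈ W i := (Finset.mem_inter.1 ha).2
      have hbi : b ∈ W i := (Finset.mem_inter.1 hb).2
      constructor
      · rintro (⟨i', h⟩ | ⟨hg, _⟩)
        · rwa [hpart a i' i h.2.1 hai] at h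
        · exact absurd ⟨i, hai, hbi⟩ hg
      · intro h; exact Or.inl ⟨i, h⟩
  have hHsP : Hs ∈ P := by
    refine hW.2.2.2 1 one_pos (fun i => H.induce (W i)) (fun i => kCopies_one_self _)
      ?_ Hs hstar
    intro i j hij
    rw [Finset.disjoint_left]
    intro x hx hy
    exact Finset.disjoint_left.1 (hW.2.1 i j hij) (Finset.mem_inter.1 hx).2
      (Finset.mem_inter.1 hy).2
  -- now derive F ∈ P, contradiction
  apply hFnP
  have hKP : Hs.induce (insert w G.verts) ∈ P :=
    hher Hs _ hHsP (le_induce Hs (insert w G.verts))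
  have hGnw : ∀ x ∈ G.verts, x ≠ w := fun x hx h => hwG (h ▸ hx)
  set ρ : ℕ → ℕ := fun a => if a = w then v else a with hρ
  have hρG : ∀ x ∈ G.verts, ρ x = x := by
    intro x hx; simp only [hρ]; rw [if_neg (hGnw x hx)]
  have hρw : ρ w = v := by simp [hρ]
  have hverts : (Hs.induce (insert w G.verts)).verts = insert w G.verts := by
    show Hs.verts ∩ insert w G.verts = _
    ext a
    simp only [Finset.mem_inter, Finset.mem_insert]
    constructor
    · rintro ⟨_, h⟩; exact h
    · rintro (rfl | h)
      · exact ⟨hwH, Or.inl rfl⟩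
      · exact ⟨hsub h, Or.inr h⟩
  have hadjK : ∀ a b, (Hs.induce (insert w G.verts)).Adj a b ↔
      (Hs.Adj a b ∧ a ∈ insert w G.verts ∧ b ∈ insert w G.verts) := fun a b => Iff.rfl
  -- key adjacency facts
  have hHsG : ∀ a ∈ G.verts, ∀ b ∈ G.verts, (Hs.Adj a b ↔ G.Adj a b) := by
    intro a ha b hb
    rw [hHsAdj]
    constructor
    · rintro (⟨i, h, _, _⟩ | ⟨_, (⟨_, _, h⟩ | ⟨h1, _, _⟩ | ⟨h1, _, _⟩)⟩)
      · exact (hind a ha b hb).1 h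
      · exact h
      · exact absurd (h1 ▸ ha) hwG
      · exact absurd (h1 ▸ hb) hwG
    · intro h
      by_cases hex : ∃ i, a ∈ W i ∧ b ∈ W i
      · obtain ⟨i, hai, hbi⟩ := hex
        exact Or.inl ⟨i, (hind a ha b hb).2 h, hai, hbi⟩
      · exact Or.inr ⟨hex, Or.inl ⟨ha, hb, h⟩⟩
  have hHsw : ∀ b ∈ G.verts, (Hs.Adj w b ↔ F.Adj v b) := by
    intro b hb
    have hguard : ¬∃ i, w ∈ W i ∧ b ∈ W i := by
      rintro ⟨i, hwi, hbi⟩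
      rw [hpart w i i₀ hwi hw] at hbi
      have : b ∈ W i₀ ∩ G.verts := Finset.mem_inter.2 ⟨hbi, hb⟩
      simp [hcon] at this
    rw [hHsAdj]
    constructor
    · rintro (⟨i, h, hwi, hbi⟩ | ⟨_, (⟨h1, _, _⟩ | ⟨_, _, h⟩ | ⟨h1, _, _⟩)⟩)
      · exact absurd ⟨i, hwi, hbi⟩ hguard
      · exact absurd h1 hwG
      · exact h
      · exact absurd (h1 ▸ hb) hwG
    · intro h
      exact Or.inr ⟨hguard, Or.inr (Or.inl ⟨rfl, hb, h⟩)⟩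
  refine mem_of_iso hP ⟨ρ, ?_, ?_⟩ hKP
  · rw [hverts, hFv]
    refine ⟨?_, ?_, ?_⟩
    · intro a ha
      simp only [Finset.coe_insert, Set.mem_insert_iff, Finset.mem_coe] at ha ⊢
      rcases ha with rfl | ha
      · exact Or.inl hρw
      · rw [hρG a ha]; exact Or.inr ha
    · intro a ha b hb hab
      simp only [Finset.coe_insert, Set.mem_insert_iff, Finset.mem_coe] at ha hb
      rcases ha with rfl | ha <;> rcases hb with rfl | hb
      · rfl
      · rw [hρw, hρG b hb] at hab; exact absurd (hab ▸ hb) hv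
      · rw [hρw, hρG a ha] at hab; exact absurd (hab ▸ ha) hv
      · rwa [hρG a ha, hρG b hb] at hab
    · intro b hbmem
      simp only [Finset.coe_insert, Set.mem_insert_iff, Finset.mem_coe] at hbmem
      rcases hbmem with rfl | hb
      · exact ⟨w, by simp, hρw⟩
      · exact ⟨b, by simp [hb], hρG b hb⟩
  · intro a ha b hb
    rw [hverts] at ha hb
    rw [hadjK]
    rcases Finset.mem_insert.1 ha with rfl | haG <;>
      rcases Finset.mem_insert.1 hb with rfl | hbG
    · rw [hρw]
      constructor
      · rintro ⟨h, _, _⟩; exact absurd h (Hs.loopless _)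
      · intro h; exact absurd h (F.loopless v)
    · rw [hρw, hρG b hbG]
      constructor
      · rintro ⟨h, _, _⟩; exact (hHsw b hbG).1 h
      · intro h
        exact ⟨(hHsw b hbG).2 h, Finset.mem_insert_self _ _, Finset.mem_insert_of_mem hbG⟩
    · rw [hρw, hρG a haG]
      constructor
      · rintro ⟨h, _, _⟩; exact F.symm _ _ ((hHsw a haG).1 (Hs.symm _ _ h))
      · intro h
        exact ⟨Hs.symm _ _ ((hHsw a haG).2 (F.symm _ _ h)),
          Finset.mem_insert_of_mem haG, Finset.mem_insert_self _ _⟩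
    · rw [hρG a haG, hρG b hbG, hFG a haG b hbG]
      constructor
      · rintro ⟨h, _, _⟩; exact (hHsG a haG b hbG).1 h
      · intro h
        exact ⟨(hHsG a haG b hbG).2 h, Finset.mem_insert_of_mem haG,
          Finset.mem_insert_of_mem hbG⟩

end S7aux
namespace S7aux

lemma restrict_decomp {P : Set SGraph} (hP : IsProperty P) (hher : IndHer P)
    {G H : SGraph} (hsub : G.verts ⊆ H.verts)
    (hind : ∀ a ∈ G.verts, ∀ b ∈ G.verts, (H.Adj a b ↔ G.Adj a b))
    {n : ℕ} {W : Fin n → Finset ℕ} (hW : IsDecomp P H W)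
    (hmeets : ∀ i, (W i ∩ G.verts).Nonempty) :
    IsDecomp P G (fun i => W i ∩ G.verts) := by
  have hWsub : ∀ i, W i ⊆ H.verts := fun i x hx =>
    hW.2.2.1 ▸ Finset.mem_biUnion.2 ⟨i, Finset.mem_univ _, hx⟩
  refine ⟨hmeets, ?_, ?_, ?_⟩
  · intro i j hij
    exact Finset.disjoint_left.2 fun x hx hy =>
      Finset.disjoint_left.1 (hW.2.1 i j hij) (Finset.mem_inter.1 hx).1
        (Finset.mem_inter.1 hy).1
  · ext x
    simp only [Finset.mem_biUnion, Finset.mem_univ, true_and, Finset.mem_inter]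
    constructor
    · rintro ⟨i, _, h⟩; exact h
    · intro hx
      have : x ∈ Finset.univ.biUnion W := hW.2.2.1.symm ▸ hsub hx
      obtain ⟨i, _, hi⟩ := Finset.mem_biUnion.1 this
      exact ⟨i, hi, hx⟩
  · intro k hk A hA0 hAdisj Hs hHs
    have hA : ∀ i, A i ∈ kCopies k (G.induce (W i ∩ G.verts)) := hA0
    clear hA0
    choose C hCiso hCU using hA
    choose φ hφ using fun i j => hCiso i j
    -- basic facts
    have hUverts : ∀ i, (G.induce (W i ∩ G.verts)).verts = W i ∩ G.verts := by
      intro i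
      show G.verts ∩ (W i ∩ G.verts) = _
      ext x; simp only [Finset.mem_inter]; tauto
    have hCsubA : ∀ i j, (C i j).verts ⊆ (A i).verts := fun i j x hx =>
      (hCU i).2.1 ▸ Finset.mem_biUnion.2 ⟨j, Finset.mem_univ _, hx⟩
    have hAsubHs : ∀ i, (A i).verts ⊆ Hs.verts := fun i x hx =>
      hHs.1 ▸ Finset.mem_biUnion.2 ⟨i, Finset.mem_univ _, hx⟩
    have hCsubHs : ∀ i j, (C i j).verts ⊆ Hs.verts := fun i j x hx =>
      hAsubHs i (hCsubA i j hx)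
    have hCdisj_eq : ∀ i (j j' : Fin k) a, a ∈ (C i j).verts → a ∈ (C i j').verts →
        j = j' := by
      intro i j j' a h1 h2
      by_contra hne
      exact Finset.disjoint_left.1 ((hCU i).1 j j' hne) h1 h2
    set N := Hs.verts.sup id + 1 with hN
    have hltN : ∀ x ∈ Hs.verts, x < N := by
      intro x hx
      have := Finset.le_sup (f := id) hx
      simp only [id] at this; omega
    -- the inverse maps and fresh-vertex maps
    set τ : Fin n → Fin k → ℕ → ℕ :=
      fun i j => Function.invFunOn (φ i j) ((C i j).verts : Set ℕ) with hτdef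
    have hbij : ∀ i j, Set.BijOn (φ i j) ((C i j).verts : Set ℕ)
        ((W i ∩ G.verts : Finset ℕ) : Set ℕ) := by
      intro i j
      have := (hφ i j).1
      rwa [hUverts i] at this
    have hτmem : ∀ i j, ∀ u ∈ W i ∩ G.verts, τ i j u ∈ (C i j).verts := by
      intro i j u hu
      exact Function.invFunOn_mem ((hbij i j).surjOn hu)
    have hτeq : ∀ i j, ∀ u ∈ W i ∩ G.verts, φ i j (τ i j u) = u := by
      intro i j u hu
      exact Function.invFunOn_eq ((hbij i j).surjOn hu)
    have hτη : ∀ i j, ∀ c ∈ (C i j).verts, τ i j (φ i j c) = c := by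
      intro i j c hc
      have hm : φ i j c ∈ W i ∩ G.verts := (hbij i j).mapsTo hc
      exact (hbij i j).injOn (hτmem i j _ hm) hc (hτeq i j _ hm)
    set ψ : Fin n → Fin k → ℕ → ℕ := fun i j u =>
      if u ∈ W i ∩ G.verts then τ i j u else N + Nat.pair (Nat.pair i j) u with hψdef
    have hψold : ∀ i j u, u ∈ W i ∩ G.verts → ψ i j u = τ i j u := by
      intro i j u hu; simp only [hψdef]; rw [if_pos hu]
    have hψoldmem : ∀ i j u, u ∈ W i ∩ G.verts → ψ i j u ∈ (C i j).verts := by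
      intro i j u hu; rw [hψold i j u hu]; exact hτmem i j u hu
    have hψnew : ∀ i j u, u ∉ W i ∩ G.verts → ψ i j u = N + Nat.pair (Nat.pair i j) u := by
      intro i j u hu; simp only [hψdef]; rw [if_neg hu]
    have hψnewge : ∀ i j u, u ∉ W i ∩ G.verts → N ≤ ψ i j u := by
      intro i j u hu; rw [hψnew i j u hu]; omega
    have hψnew_not : ∀ i j u, u ∉ W i ∩ G.verts → ψ i j u ∉ Hs.verts := by
      intro i j u hu hmem
      exact absurd (hltN _ hmem) (not_lt.2 (hψnewge i j u hu))
    have hψinj : ∀ i j, ∀ u ∈ W i, ∀ u' ∈ W i, ψ i j u = ψ i j u' → u = u' := by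
      intro i j u hu u' hu' heq
      by_cases h1 : u ∈ W i ∩ G.verts <;> by_cases h2 : u' ∈ W i ∩ G.verts
      · rw [hψold i j u h1, hψold i j u' h2] at heq
        have := congrArg (φ i j) heq
        rwa [hτeq i j u h1, hτeq i j u' h2] at this
      · have := hψoldmem i j u h1
        rw [heq, hψnew i j u' h2] at this
        exact absurd (hltN _ (hCsubHs i j this)) (by omega)
      · have := hψoldmem i j u' h2
        rw [← heq, hψnew i j u h1] at this
        exact absurd (hltN _ (hCsubHs i j this)) (by omega)
      · rw [hψnew i j u h1, hψnew i j u' h2] at heq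
        have : Nat.pair (Nat.pair i j) u = Nat.pair (Nat.pair i j) u' := by omega
        exact (Nat.pair_eq_pair.1 this).2
    have hψglob : ∀ i j i' j' u u', u ∈ W i → u' ∈ W i' → ψ i j u = ψ i' j' u' →
        (i = i' ∧ j = j') := by
      intro i j i' j' u u' hu hu' heq
      by_cases h1 : u ∈ W i ∩ G.verts <;> by_cases h2 : u' ∈ W i' ∩ G.verts
      · have m1 := hψoldmem i j u h1
        have m2 := hψoldmem i' j' u' h2
        rw [heq] at m1
        by_cases hii : i = i'
        · subst hii
          exact ⟨rfl, hCdisj_eq i j j' _ m1 m2⟩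
        · exact (Finset.disjoint_left.1 (hAdisj i i' hii)
            (hCsubA i j m1) (hCsubA i' j' m2)).elim
      · have := hψoldmem i j u h1
        rw [heq, hψnew i' j' u' h2] at this
        exact absurd (hltN _ (hCsubHs i j this)) (by omega)
      · have := hψoldmem i' j' u' h2
        rw [← heq, hψnew i j u h1] at this
        exact absurd (hltN _ (hCsubHs i' j' this)) (by omega)
      · rw [hψnew i j u h1, hψnew i' j' u' h2] at heq
        have : Nat.pair (Nat.pair i j) u = Nat.pair (Nat.pair i' j') u' := by omega
        have h := (Nat.pair_eq_pair.1 this).1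
        obtain ⟨ha, hb⟩ := Nat.pair_eq_pair.1 h
        exact ⟨Fin.ext ha, Fin.ext hb⟩
    -- the big copies
    set D : Fin n → Fin k → SGraph := fun i j =>
      { verts := (W i).image (ψ i j)
        Adj := fun a b => ∃ u ∈ W i, ∃ u' ∈ W i, a = ψ i j u ∧ b = ψ i j u' ∧ H.Adj u u'
        symm := by
          rintro a b ⟨u, hu, u', hu', rfl, rfl, h⟩
          exact ⟨u', hu', u, hu, rfl, rfl, H.symm _ _ h⟩
        loopless := by
          rintro a ⟨u, hu, u', hu', rfl, heq, h⟩
          rw [hψinj i j u' hu' u hu heq.symm] at h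
          exact H.loopless _ h
        mem_of_adj := by
          rintro a b ⟨u, hu, u', hu', rfl, rfl, h⟩
          exact ⟨Finset.mem_image.2 ⟨u, hu, rfl⟩, Finset.mem_image.2 ⟨u', hu', rfl⟩⟩ }
      with hD
    have hDadj : ∀ i j a b, (D i j).Adj a b ↔
        ∃ u ∈ W i, ∃ u' ∈ W i, a = ψ i j u ∧ b = ψ i j u' ∧ H.Adj u u' :=
      fun i j a b => Iff.rfl
    have hDverts : ∀ i j, (D i j).verts = (W i).image (ψ i j) := fun i j => rfl
    have hCsubD : ∀ i j, (C i j).verts ⊆ (D i j).verts := by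
      intro i j c hc
      have hm : φ i j c ∈ W i ∩ G.verts := (hbij i j).mapsTo hc
      refine Finset.mem_image.2 ⟨φ i j c, (Finset.mem_inter.1 hm).1, ?_⟩
      rw [hψold i j _ hm, hτη i j c hc]
    have hDold : ∀ i j a, a ∈ (D i j).verts → a ∈ Hs.verts → a ∈ (C i j).verts := by
      intro i j a haD haHs
      obtain ⟨u, hu, rfl⟩ := Finset.mem_image.1 haD
      by_cases h : u ∈ W i ∩ G.verts
      · exact hψoldmem i j u h
      · exact absurd haHs (hψnew_not i j u h)
    have hDeq : ∀ {i j i' j' : _} {a}, a ∈ (D i j).verts → a ∈ (D i' j').verts →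
        i = i' ∧ j = j' := by
      intro i j i' j' a h1 h2
      obtain ⟨u, hu, he⟩ := Finset.mem_image.1 h1
      obtain ⟨u', hu', he'⟩ := Finset.mem_image.1 h2
      exact hψglob i j i' j' u u' hu hu' (he.trans he'.symm)
    -- D i j is a copy of H.induce (W i)
    have hHWi : ∀ i, (H.induce (W i)).verts = W i := by
      intro i
      show H.verts ∩ W i = W i
      ext x; simp only [Finset.mem_inter]
      exact ⟨fun h => h.2, fun h => ⟨hWsub i h, h⟩⟩
    have hDiso : ∀ i j, (D i j).Iso (H.induce (W i)) := by
      intro i j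
      apply iso_symm
      refine ⟨ψ i j, ?_, ?_⟩
      · rw [hHWi i, hDverts, Finset.coe_image]
        exact Set.InjOn.bijOn_image (fun u hu u' hu' => hψinj i j u hu u' hu')
      · intro u hu u' hu'
        rw [hHWi i] at hu hu'
        constructor
        · rintro ⟨h, h1, h2⟩
          exact ⟨u, h1, u', h2, rfl, rfl, h⟩
        · rintro ⟨x, hx, x', hx', he, he', h⟩
          rw [hψinj i j u hu x hx he, hψinj i j u' hu' x' hx' he']
          exact ⟨h, hx, hx'⟩
    -- the disjoint unions B i
    set B : Fin n → SGraph := fun i =>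
      { verts := Finset.univ.biUnion fun j => (D i j).verts
        Adj := fun a b => ∃ j, (D i j).Adj a b
        symm := by rintro a b ⟨j, h⟩; exact ⟨j, (D i j).symm _ _ h⟩
        loopless := by rintro a ⟨j, h⟩; exact (D i j).loopless _ h
        mem_of_adj := by
          rintro a b ⟨j, h⟩
          obtain ⟨h1, h2⟩ := (D i j).mem_of_adj _ _ h
          exact ⟨Finset.mem_biUnion.2 ⟨j, Finset.mem_univ _, h1⟩,
            Finset.mem_biUnion.2 ⟨j, Finset.mem_univ _, h2⟩⟩ } with hB
    have hBverts : ∀ i, (B i).verts = Finset.univ.biUnion fun j => (D i j).verts :=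
      fun i => rfl
    have hBmem : ∀ i a, a ∈ (B i).verts ↔ ∃ j, a ∈ (D i j).verts := by
      intro i a
      rw [hBverts]
      simp [Finset.mem_biUnion]
    have hBcop : ∀ i, B i ∈ kCopies k (H.induce (W i)) := by
      intro i
      refine ⟨D i, hDiso i, ?_, rfl, fun a b => Iff.rfl⟩
      intro j j' hjj
      exact Finset.disjoint_left.2 fun a h1 h2 => hjj ((hDeq h1 h2).2)
    have hBdisj : ∀ i i', i ≠ i' → Disjoint (B i).verts (B i').verts := by
      intro i i' hii
      refine Finset.disjoint_left.2 fun a h1 h2 => ?_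
      obtain ⟨j, hj⟩ := (hBmem i a).1 h1
      obtain ⟨j', hj'⟩ := (hBmem i' a).1 h2
      exact hii (hDeq hj hj').1
    -- the big star join
    set Hss : SGraph :=
      { verts := Finset.univ.biUnion fun i => (B i).verts
        Adj := fun a b => (∃ i j, (D i j).Adj a b) ∨
          (Hs.Adj a b ∧ ¬∃ i j, a ∈ (D i j).verts ∧ b ∈ (D i j).verts)
        symm := by
          rintro a b (⟨i, j, h⟩ | ⟨h, hg⟩)
          · exact Or.inl ⟨i, j, (D i j).symm _ _ h⟩
          · exact Or.inr ⟨Hs.symm _ _ h, fun ⟨i, j, h1, h2⟩ => hg ⟨i, j, h2, h1⟩⟩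
        loopless := by
          rintro a (⟨i, j, h⟩ | ⟨h, _⟩)
          · exact (D i j).loopless _ h
          · exact Hs.loopless _ h
        mem_of_adj := by
          rintro a b (⟨i, j, h⟩ | ⟨h, _⟩)
          · obtain ⟨h1, h2⟩ := (D i j).mem_of_adj _ _ h
            exact ⟨Finset.mem_biUnion.2 ⟨i, Finset.mem_univ _,
                Finset.mem_biUnion.2 ⟨j, Finset.mem_univ _, h1⟩⟩,
              Finset.mem_biUnion.2 ⟨i, Finset.mem_univ _,
                Finset.mem_biUnion.2 ⟨j, Finset.mem_univ _, h2⟩⟩⟩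
          · obtain ⟨h1, h2⟩ := Hs.mem_of_adj _ _ h
            have sub : Hs.verts ⊆ Finset.univ.biUnion fun i => (B i).verts := by
              intro x hx
              have : x ∈ Finset.univ.biUnion fun i => (A i).verts := hHs.1 ▸ hx
              obtain ⟨i, _, hi⟩ := Finset.mem_biUnion.1 this
              have : x ∈ Finset.univ.biUnion fun j => (C i j).verts := (hCU i).2.1 ▸ hi
              obtain ⟨j, _, hj⟩ := Finset.mem_biUnion.1 this
              exact Finset.mem_biUnion.2 ⟨i, Finset.mem_univ _,
                Finset.mem_biUnion.2 ⟨j, Finset.mem_univ _, hCsubD i j hj⟩⟩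
            exact ⟨sub h1, sub h2⟩ } with hHss
    have hHssAdj : ∀ a b, Hss.Adj a b ↔ ((∃ i j, (D i j).Adj a b) ∨
        (Hs.Adj a b ∧ ¬∃ i j, a ∈ (D i j).verts ∧ b ∈ (D i j).verts)) :=
      fun a b => Iff.rfl
    have hHsSub : Hs.verts ⊆ Hss.verts := by
      intro x hx
      have : x ∈ Finset.univ.biUnion fun i => (A i).verts := hHs.1 ▸ hx
      obtain ⟨i, _, hi⟩ := Finset.mem_biUnion.1 this
      have : x ∈ Finset.univ.biUnion fun j => (C i j).verts := (hCU i).2.1 ▸ hi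
      obtain ⟨j, _, hj⟩ := Finset.mem_biUnion.1 this
      show x ∈ Finset.univ.biUnion fun i => (B i).verts
      exact Finset.mem_biUnion.2 ⟨i, Finset.mem_univ _,
        Finset.mem_biUnion.2 ⟨j, Finset.mem_univ _, hCsubD i j hj⟩⟩
    -- membership of old vertices in C-copies
    have hHsmemC : ∀ a ∈ Hs.verts, ∃ i j, a ∈ (C i j).verts := by
      intro a ha
      have : a ∈ Finset.univ.biUnion fun i => (A i).verts := hHs.1 ▸ ha
      obtain ⟨i, _, hi⟩ := Finset.mem_biUnion.1 this
      have : a ∈ Finset.univ.biUnion fun j => (C i j).verts := (hCU i).2.1 ▸ hi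
      obtain ⟨j, _, hj⟩ := Finset.mem_biUnion.1 this
      exact ⟨i, j, hj⟩
    -- core adjacency equivalences
    have hCD : ∀ i j a b, a ∈ (C i j).verts → b ∈ (C i j).verts →
        ((C i j).Adj a b ↔ (D i j).Adj a b) := by
      intro i j a b ha hb
      have hma : φ i j a ∈ W i ∩ G.verts := (hbij i j).mapsTo ha
      have hmb : φ i j b ∈ W i ∩ G.verts := (hbij i j).mapsTo hb
      have hψa : ψ i j (φ i j a) = a := by rw [hψold i j _ hma, hτη i j a ha]
      have hψb : ψ i j (φ i j b) = b := by rw [hψold i j _ hmb, hτη i j b hb]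
      have hadjiff := (hφ i j).2 a ha b hb
      have hGind : (G.induce (W i ∩ G.verts)).Adj (φ i j a) (φ i j b) ↔
          (G.Adj (φ i j a) (φ i j b) ∧ φ i j a ∈ W i ∩ G.verts ∧
            φ i j b ∈ W i ∩ G.verts) := Iff.rfl
      constructor
      · intro h
        have h2 := (hGind.1 (hadjiff.1 h)).1
        have hH : H.Adj (φ i j a) (φ i j b) :=
          (hind _ (Finset.mem_inter.1 hma).2 _ (Finset.mem_inter.1 hmb).2).2 h2
        exact ⟨φ i j a, (Finset.mem_inter.1 hma).1, φ i j b, (Finset.mem_inter.1 hmb).1,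
          hψa.symm, hψb.symm, hH⟩
      · rintro ⟨u, hu, u', hu', he, he', hH⟩
        have hua : u = φ i j a := hψinj i j u hu _ (Finset.mem_inter.1 hma).1
          (by rw [← he, hψa])
        have hub : u' = φ i j b := hψinj i j u' hu' _ (Finset.mem_inter.1 hmb).1
          (by rw [← he', hψb])
        rw [hua, hub] at hH
        have hG : G.Adj (φ i j a) (φ i j b) :=
          (hind _ (Finset.mem_inter.1 hma).2 _ (Finset.mem_inter.1 hmb).2).1 hH
        exact hadjiff.2 (hGind.2 ⟨hG, hma, hmb⟩)
    have hHsC : ∀ i j a b, a ∈ (C i j).verts → b ∈ (C i j).verts →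
        (Hs.Adj a b ↔ (C i j).Adj a b) := by
      intro i j a b ha hb
      rw [hHs.2 i a (hCsubA i j ha) b (hCsubA i j hb), (hCU i).2.2]
      constructor
      · rintro ⟨j', h⟩
        have h1 := ((C i j').mem_of_adj _ _ h).1
        rwa [hCdisj_eq i j' j a h1 ha] at h
      · intro h; exact ⟨j, h⟩
    -- Hss is in the star join of B
    have hHssStar : Hss ∈ StarJoin B := by
      refine ⟨rfl, ?_⟩
      intro i a ha b hb
      rw [hHssAdj]
      obtain ⟨ja, hja⟩ := (hBmem i a).1 ha
      obtain ⟨jb, hjb⟩ := (hBmem i b).1 hb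
      constructor
      · rintro (⟨i', j', h⟩ | ⟨hadj, hg⟩)
        · obtain ⟨h1, h2⟩ := (D i' j').mem_of_adj _ _ h
          obtain ⟨hii, -⟩ := hDeq h1 hja
          subst hii
          exact ⟨j', h⟩
        · -- impossible: within the same B i, old cross-copy edges don't exist
          exfalso
          obtain ⟨hZ1, hZ2⟩ := Hs.mem_of_adj _ _ hadj
          have hca : a ∈ (C i ja).verts := hDold i ja a hja hZ1
          have hcb : b ∈ (C i jb).verts := hDold i jb b hjb hZ2
          by_cases hjj : ja = jb
          · subst hjj; exact hg ⟨i, ja, hja, hjb⟩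
          · have := (hHs.2 i a (hCsubA i ja hca) b (hCsubA i jb hcb)).1 hadj
            rw [(hCU i).2.2] at this
            obtain ⟨j'', h''⟩ := this
            obtain ⟨m1, m2⟩ := (C i j'').mem_of_adj _ _ h''
            exact hjj ((hCdisj_eq i ja j'' a hca m1).trans
              (hCdisj_eq i j'' jb b m2 hcb))
      · rintro ⟨j, h⟩
        exact Or.inl ⟨i, j, h⟩
    have hHssP : Hss ∈ P := hW.2.2.2 k hk B hBcop hBdisj Hss hHssStar
    -- finally : Hs is an induced subgraph of Hss
    refine hher Hss Hs hHssP ⟨Hs.verts, hHsSub, id, ?_, ?_⟩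
    · have hveq : (Hss.induce Hs.verts).verts = Hs.verts := by
        show Hss.verts ∩ Hs.verts = Hs.verts
        ext x; simp only [Finset.mem_inter]
        exact ⟨fun h => h.2, fun h => ⟨hHsSub h, h⟩⟩
      rw [hveq]
      exact Set.bijOn_id _
    · intro a ha b hb
      have hKadj : (Hss.induce Hs.verts).Adj a b ↔
          (Hss.Adj a b ∧ a ∈ Hs.verts ∧ b ∈ Hs.verts) := Iff.rfl
      show Hs.Adj a b ↔ (Hss.induce Hs.verts).Adj (id a) (id b)
      rw [show id a = a from rfl, show id b = b from rfl, hKadj, hHssAdj]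
      constructor
      · intro h
        refine ⟨?_, ha, hb⟩
        by_cases hex : ∃ i j, a ∈ (D i j).verts ∧ b ∈ (D i j).verts
        · obtain ⟨i, j, h1, h2⟩ := hex
          have hca : a ∈ (C i j).verts := hDold i j a h1 ha
          have hcb : b ∈ (C i j).verts := hDold i j b h2 hb
          exact Or.inl ⟨i, j, (hCD i j a b hca hcb).1 ((hHsC i j a b hca hcb).1 h)⟩
        · exact Or.inr ⟨h, hex⟩
      · rintro ⟨(⟨i, j, h⟩ | ⟨h, _⟩), _, _⟩
        · obtain ⟨h1, h2⟩ := (D i j).mem_of_adj _ _ h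
          have hca : a ∈ (C i j).verts := hDold i j a h1 ha
          have hcb : b ∈ (C i j).verts := hDold i j b h2 hb
          exact (hHsC i j a b hca hcb).2 ((hCD i j a b hca hcb).2 h)
        · exact h

end S7aux
-- STATEMENT 7
theorem statement7 (P : Set SGraph) (hP : IsProperty P) (hher : IndHer P)
    (hne : P ≠ Set.univ)
    (G : SGraph) (hGs : Strict P G) (hdec : decP P G = decOf P)
    (V : Fin (decOf P) → Finset ℕ) (hV : IsDecomp P G V)
    (huniq : ∀ W : Fin (decOf P) → Finset ℕ, IsDecomp P G W →
      ∃ σ : Equiv.Perm (Fin (decOf P)), ∀ i, W i = V (σ i))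
    (H : SGraph) (hHP : H ∈ P) (hsub : G.verts ⊆ H.verts)
    (hind : ∀ a ∈ G.verts, ∀ b ∈ G.verts, (H.Adj a b ↔ G.Adj a b)) :
    Strict P H ∧ decP P H = decOf P ∧
    ∀ W : Fin (decOf P) → Finset ℕ, IsDecomp P H W →
      ∃ σ : Equiv.Perm (Fin (decOf P)), ∀ i, W (σ i) ∩ G.verts = V i := by
  have hHstrict : Strict P H := S7aux.strict_of_superset hP hher hGs hHP hsub hind
  have hrestr : ∀ (m : ℕ) (W : Fin m → Finset ℕ), IsDecomp P H W →
      IsDecomp P G (fun i => W i ∩ G.verts) := fun m W hWd =>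
    S7aux.restrict_decomp hP hher hsub hind hWd
      (fun i => S7aux.parts_meet hP hher hGs hsub hind hWd i)
  have hbdd : BddAbove {m | ∃ V' : Fin m → Finset ℕ, IsDecomp P G V'} := by
    refine ⟨G.verts.card, ?_⟩
    rintro m ⟨V', hV'⟩
    exact S7aux.decomp_le_card hV'
  have hdecH : decP P H = decOf P := by
    apply le_antisymm
    · show sSup {m | ∃ W : Fin m → Finset ℕ, IsDecomp P H W} ≤ decOf P
      apply csSup_le'
      rintro m ⟨W, hWd⟩
      have hm : m ∈ {m | ∃ V' : Fin m → Finset ℕ, IsDecomp P G V'} :=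
        ⟨fun i => W i ∩ G.verts, hrestr m W hWd⟩
      have : m ≤ decP P G := le_csSup hbdd hm
      rwa [hdec] at this
    · exact Nat.sInf_le ⟨H, hHstrict, rfl⟩
  refine ⟨hHstrict, hdecH, ?_⟩
  intro W hWd
  obtain ⟨σ, hσ⟩ := huniq (fun i => W i ∩ G.verts) (hrestr _ W hWd)
  refine ⟨σ.symm, fun i => ?_⟩
  have := hσ (σ.symm i)
  simpa using this
end
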